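/- arXiv:1407.1591 — 6 statements merged into one kernel-verified Lean document; each statement's English description precedes it below -/
import Mathlib

section
/- Let C > 0 be a constant and let a_n, b_n be sequences with C^{-1} ≤ a_n, b_n ≤ C for all sufficiently large n. Set p_n = a_n (log n)/n, q_n = b_n (log n)/n, and c_n = a_n + b_n. Let X ~ Binomial(n, p_n) and Y ~ Binomial(n, q_n) be independent and Z = X + Y. Then there is a sequence ε_n → 0 such that for every integer k with 0 ≤ k ≤ 10 c_n log n, |Pr(Z = k) · k! · n^{c_n} / (c_n log n)^k − 1| ≤ ε_n. -/
open Real Filter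

/-- Probability that a Binomial(m, p) random variable equals `k`. -/
noncomputable def binomProb (m : ℕ) (p : ℝ) (k : ℕ) : ℝ :=
  (m.choose k : ℝ) * p ^ k * (1 - p) ^ (m - k)

/-- For independent `X ~ Binomial(m, p)` and `Y ~ Binomial(n, q)`,
the probability `Pr(Y ≥ X - ℓ)`. -/
noncomputable def prGEshift (m : ℕ) (p : ℝ) (n : ℕ) (q : ℝ) (ℓ : ℝ) : ℝ :=
  ∑ j ∈ Finset.range (m + 1), ∑ k ∈ Finset.range (n + 1),
    if (j : ℝ) - ℓ ≤ (k : ℝ) then binomProb m p j * binomProb n q k else 0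

/-- For independent `X ~ Binomial(m, p)` and `Y ~ Binomial(n, q)`,
the probability `Pr(Y ≥ X)`. -/
noncomputable def prGE (m : ℕ) (p : ℝ) (n : ℕ) (q : ℝ) : ℝ :=
  prGEshift m p n q 0

/-- `P(m, n, p, q) = Pr(Y ≥ X)` for independent `X ~ Binomial(m, max p q)`
and `Y ~ Binomial(n, min p q)`. -/
noncomputable def Pmn (m n : ℕ) (p q : ℝ) : ℝ :=
  prGE m (max p q) n (min p q)

/-- `P(n, p, q) = P(n, n, p, q)`. -/
noncomputable def Pn (n : ℕ) (p q : ℝ) : ℝ :=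
  Pmn n n p q

/-- The probability that `Z = X + Y` equals `k`, for independent
`X ~ Binomial(n, p)` and `Y ~ Binomial(n, q)`. -/
noncomputable def prSumEq (n : ℕ) (p q : ℝ) (k : ℕ) : ℝ :=
  ∑ j ∈ Finset.range (k + 1), binomProb n p j * binomProb n q (k - j)

lemma binomProb_nonneg {n j : ℕ} {p : ℝ} (hp : 0 ≤ p) (hp1 : p ≤ 1) :
    0 ≤ binomProb n p j := by
  unfold binomProb
  have h1p : (0:ℝ) ≤ 1 - p := by linarith
  positivity

lemma cast_sub_le_cast (n j : ℕ) : (n:ℝ) - (j:ℝ) ≤ ((n - j : ℕ) : ℝ) := by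
  rcases le_total j n with h | h
  · rw [Nat.cast_sub h]
  · have h1 : (n:ℝ) ≤ j := Nat.cast_le.mpr h
    have h2 : n - j = 0 := Nat.sub_eq_zero_of_le h
    rw [h2]; simp; linarith

lemma binom_key (n j : ℕ) (p : ℝ) :
    binomProb n p j * (j.factorial : ℝ) = (n.descFactorial j : ℝ) * p ^ j * (1-p) ^ (n-j) := by
  unfold binomProb
  rw [Nat.descFactorial_eq_factorial_mul_choose]
  push_cast
  ring

lemma binom_upper (n j : ℕ) (p : ℝ) (hp : 0 ≤ p) (hp1 : p ≤ 1) :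
    binomProb n p j * Real.exp ((n:ℝ) * p) * (j.factorial : ℝ) ≤
      ((n:ℝ) * p) ^ j * Real.exp ((j:ℝ) * p) := by
  have h1p : (0:ℝ) ≤ 1 - p := by linarith
  have hd : (n.descFactorial j : ℝ) ≤ (n:ℝ) ^ j := by
    exact_mod_cast Nat.descFactorial_le_pow n j
  have hq : (1 - p) ^ (n - j) ≤ Real.exp (-p) ^ (n - j) :=
    pow_le_pow_left₀ h1p (by linarith [Real.add_one_le_exp (-p)]) _
  calc binomProb n p j * Real.exp ((n:ℝ) * p) * (j.factorial : ℝ)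
      = (n.descFactorial j : ℝ) * p ^ j * (1-p) ^ (n-j) * Real.exp ((n:ℝ) * p) := by
        rw [mul_right_comm, binom_key]
    _ ≤ (n:ℝ) ^ j * p ^ j * Real.exp (-p) ^ (n-j) * Real.exp ((n:ℝ) * p) := by
        gcongr
    _ = ((n:ℝ) * p) ^ j * Real.exp (((n-j:ℕ):ℝ) * (-p) + (n:ℝ) * p) := by
        rw [← Real.exp_nat_mul, Real.exp_add, mul_pow]; ring
    _ ≤ ((n:ℝ) * p) ^ j * Real.exp ((j:ℝ) * p) := by
        gcongr
        nlinarith [cast_sub_le_cast n j]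

lemma exp_neg_le_one_sub {p : ℝ} (hp : 0 ≤ p) (hp5 : p ≤ 1/5) :
    Real.exp (-(p + p * p)) ≤ 1 - p := by
  have hsq : Real.exp (p + p*p) = Real.exp ((p + p*p)/2) * Real.exp ((p + p*p)/2) := by
    rw [← Real.exp_add]; ring_nf
  have h1 : 1 + (p + p*p)/2 ≤ Real.exp ((p + p*p)/2) := by
    linarith [Real.add_one_le_exp ((p + p*p)/2)]
  have h2 : (1 + (p + p*p)/2) * (1 + (p + p*p)/2) ≤ Real.exp (p + p*p) := by
    rw [hsq]
    have hpos : (0:ℝ) ≤ 1 + (p + p*p)/2 := by nlinarith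
    exact mul_le_mul h1 h1 hpos (Real.exp_pos _).le
  have key : 1 ≤ (1 - p) * Real.exp (p + p*p) := by
    have h3 : (1 - p) * ((1 + (p + p*p)/2) * (1 + (p + p*p)/2)) ≤
        (1 - p) * Real.exp (p + p*p) :=
      mul_le_mul_of_nonneg_left h2 (by linarith)
    have h4 : (0:ℝ) ≤ 1 - 3*p - p^2 - p^3 := by
      nlinarith [sq_nonneg p, mul_nonneg hp hp, mul_nonneg (mul_nonneg hp hp) hp]
    nlinarith [h3, mul_nonneg (mul_nonneg hp hp) h4]
  have hmul : Real.exp (-(p + p*p)) * Real.exp (p + p*p) = 1 := by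
    rw [← Real.exp_add, neg_add_cancel, Real.exp_zero]
  nlinarith [key, hmul, Real.exp_pos (p + p*p)]

lemma binom_lower (n j k : ℕ) (p : ℝ) (hn : 0 < n) (hp : 0 ≤ p) (hp5 : p ≤ 1/5)
    (hjk : j ≤ k) (hkn : k ≤ n) :
    ((n:ℝ) * p) ^ j * (1 - (k:ℝ)/(n:ℝ)) ^ j * Real.exp (-((n:ℝ) * p * p)) ≤
      binomProb n p j * Real.exp ((n:ℝ) * p) * (j.factorial : ℝ) := by
  have h1p : (0:ℝ) ≤ 1 - p := by linarith
  have hd : ((n - k : ℕ) : ℝ) ^ j ≤ (n.descFactorial j : ℝ) := by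
    have h := le_trans (Nat.pow_le_pow_left (show n - k ≤ n + 1 - j by omega) j)
      (Nat.pow_sub_le_descFactorial n j)
    exact_mod_cast h
  have hnk : ((n - k : ℕ) : ℝ) = (n:ℝ) - (k:ℝ) := Nat.cast_sub hkn
  have hn0 : (n:ℝ) ≠ 0 := by positivity
  have hfac : ((n:ℝ) - (k:ℝ)) * p = ((n:ℝ) * p) * (1 - (k:ℝ)/(n:ℝ)) := by
    field_simp
  have hexp : Real.exp (-((n:ℝ) * p * p)) =
      Real.exp (-((n:ℝ) * (p + p*p))) * Real.exp ((n:ℝ) * p) := by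
    rw [← Real.exp_add]; congr 1; ring
  have hpow : Real.exp (-((n:ℝ) * (p + p*p))) ≤ (1 - p) ^ (n - j) := by
    have e1 : Real.exp (-((n:ℝ) * (p + p*p))) = Real.exp (-(p + p*p)) ^ n := by
      rw [← Real.exp_nat_mul]; congr 1; ring
    have e2 : Real.exp (-(p + p*p)) ^ n ≤ (1 - p) ^ n :=
      pow_le_pow_left₀ (Real.exp_pos _).le (exp_neg_le_one_sub hp hp5) n
    have e3 : (1 - p) ^ n ≤ (1 - p) ^ (n - j) :=
      pow_le_pow_of_le_one h1p (by linarith) (Nat.sub_le n j)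
    rw [e1]; exact le_trans e2 e3
  have hb : ((n:ℝ) * p) ^ j * (1 - (k:ℝ)/(n:ℝ)) ^ j = ((n - k : ℕ):ℝ) ^ j * p ^ j := by
    rw [← mul_pow, ← hfac, mul_pow, hnk]
  calc ((n:ℝ) * p) ^ j * (1 - (k:ℝ)/(n:ℝ)) ^ j * Real.exp (-((n:ℝ) * p * p))
      = ((n - k : ℕ):ℝ) ^ j * p ^ j * (Real.exp (-((n:ℝ) * (p + p*p))) * Real.exp ((n:ℝ) * p)) := by
        rw [hb, hexp, mul_assoc]
    _ ≤ (n.descFactorial j : ℝ) * p ^ j * ((1 - p) ^ (n - j) * Real.exp ((n:ℝ) * p)) := by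
        have h1 : (0:ℝ) ≤ p ^ j := pow_nonneg hp j
        have h2 : (0:ℝ) ≤ ((n - k : ℕ):ℝ) ^ j := by positivity
        have h3 := mul_le_mul hd (le_refl (p ^ j)) h1 (le_trans h2 hd)
        have h4 := mul_le_mul_of_nonneg_right hpow (Real.exp_pos ((n:ℝ) * p)).le
        exact mul_le_mul h3 h4 (by positivity) (by positivity)
    _ = binomProb n p j * Real.exp ((n:ℝ) * p) * (j.factorial : ℝ) := by
        conv_rhs => rw [mul_right_comm, binom_key]
        ring

lemma pair_upper (n j k : ℕ) (p q : ℝ) (hp0 : 0 ≤ p) (hp1 : p ≤ 1)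
    (hq0 : 0 ≤ q) (hq1 : q ≤ 1) (hjk : j ≤ k) :
    binomProb n p j * binomProb n q (k - j) * (k.factorial : ℝ) *
        Real.exp ((n:ℝ) * p + (n:ℝ) * q) ≤
      Real.exp ((k:ℝ) * (p + q)) * (((n:ℝ) * p) ^ j * ((n:ℝ) * q) ^ (k - j) * (k.choose j : ℝ)) := by
  have h1 := binom_upper n j p hp0 hp1
  have h2 := binom_upper n (k - j) q hq0 hq1
  have hf : (k.factorial : ℝ) = (k.choose j : ℝ) * (j.factorial : ℝ) * ((k - j).factorial : ℝ) := by
    exact_mod_cast congrArg (Nat.cast (R := ℝ)) (Nat.choose_mul_factorial_mul_factorial hjk).symm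
  have hBq : 0 ≤ binomProb n q (k - j) * Real.exp ((n:ℝ) * q) * ((k - j).factorial : ℝ) := by
    have := binomProb_nonneg (n := n) (j := k - j) hq0 hq1
    positivity
  have hR1 : 0 ≤ ((n:ℝ) * p) ^ j * Real.exp ((j:ℝ) * p) := by positivity
  have h12 := mul_le_mul h1 h2 hBq hR1
  have hexp : Real.exp ((j:ℝ) * p) * Real.exp (((k - j : ℕ):ℝ) * q) ≤ Real.exp ((k:ℝ) * (p + q)) := by
    rw [← Real.exp_add]
    apply Real.exp_le_exp.mpr
    have hj : (j:ℝ) ≤ (k:ℝ) := Nat.cast_le.mpr hjk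
    have hkj : ((k - j : ℕ):ℝ) ≤ (k:ℝ) := Nat.cast_le.mpr (Nat.sub_le k j)
    nlinarith
  calc binomProb n p j * binomProb n q (k - j) * (k.factorial : ℝ) *
        Real.exp ((n:ℝ) * p + (n:ℝ) * q)
      = (k.choose j : ℝ) * ((binomProb n p j * Real.exp ((n:ℝ) * p) * (j.factorial : ℝ)) *
          (binomProb n q (k - j) * Real.exp ((n:ℝ) * q) * ((k - j).factorial : ℝ))) := by
        rw [hf, Real.exp_add]; ring
    _ ≤ (k.choose j : ℝ) * ((((n:ℝ) * p) ^ j * Real.exp ((j:ℝ) * p)) *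
          (((n:ℝ) * q) ^ (k - j) * Real.exp (((k - j : ℕ):ℝ) * q))) :=
        mul_le_mul_of_nonneg_left h12 (by positivity)
    _ = (k.choose j : ℝ) * (((n:ℝ) * p) ^ j * ((n:ℝ) * q) ^ (k - j)) *
          (Real.exp ((j:ℝ) * p) * Real.exp (((k - j : ℕ):ℝ) * q)) := by ring
    _ ≤ (k.choose j : ℝ) * (((n:ℝ) * p) ^ j * ((n:ℝ) * q) ^ (k - j)) * Real.exp ((k:ℝ) * (p + q)) := by
        apply mul_le_mul_of_nonneg_left hexp (by positivity)
    _ = Real.exp ((k:ℝ) * (p + q)) * (((n:ℝ) * p) ^ j * ((n:ℝ) * q) ^ (k - j) * (k.choose j : ℝ)) := by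
        ring

lemma pair_lower (n j k : ℕ) (p q : ℝ) (hn : 0 < n) (hp0 : 0 ≤ p) (hp5 : p ≤ 1/5)
    (hq0 : 0 ≤ q) (hq5 : q ≤ 1/5) (hjk : j ≤ k) (hkn : k ≤ n) :
    ((1 - (k:ℝ)/(n:ℝ)) ^ k * Real.exp (-((n:ℝ) * p * p + (n:ℝ) * q * q))) *
        (((n:ℝ) * p) ^ j * ((n:ℝ) * q) ^ (k - j) * (k.choose j : ℝ)) ≤
      binomProb n p j * binomProb n q (k - j) * (k.factorial : ℝ) *
        Real.exp ((n:ℝ) * p + (n:ℝ) * q) := by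
  have h1 := binom_lower n j k p hn hp0 hp5 hjk hkn
  have h2 := binom_lower n (k - j) k q hn hq0 hq5 (Nat.sub_le k j) hkn
  have hf : (k.factorial : ℝ) = (k.choose j : ℝ) * (j.factorial : ℝ) * ((k - j).factorial : ℝ) := by
    exact_mod_cast congrArg (Nat.cast (R := ℝ)) (Nat.choose_mul_factorial_mul_factorial hjk).symm
  have hkn' : (k:ℝ) / (n:ℝ) ≤ 1 := by
    rw [div_le_one (by exact_mod_cast hn)]
    exact_mod_cast hkn
  have h1kn : (0:ℝ) ≤ 1 - (k:ℝ)/(n:ℝ) := by linarith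
  have hL1 : 0 ≤ ((n:ℝ) * p) ^ j * (1 - (k:ℝ)/(n:ℝ)) ^ j * Real.exp (-((n:ℝ) * p * p)) := by
    positivity
  have hL2 : 0 ≤ ((n:ℝ) * q) ^ (k - j) * (1 - (k:ℝ)/(n:ℝ)) ^ (k - j) *
      Real.exp (-((n:ℝ) * q * q)) := by positivity
  have h12 := mul_le_mul h1 h2 hL2 (le_trans hL1 h1)
  have hpowk : (1 - (k:ℝ)/(n:ℝ)) ^ j * (1 - (k:ℝ)/(n:ℝ)) ^ (k - j) = (1 - (k:ℝ)/(n:ℝ)) ^ k := by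
    rw [← pow_add]
    congr 1
    omega
  have hexp2 : Real.exp (-((n:ℝ) * p * p)) * Real.exp (-((n:ℝ) * q * q)) =
      Real.exp (-((n:ℝ) * p * p + (n:ℝ) * q * q)) := by
    rw [← Real.exp_add]; congr 1; ring
  calc ((1 - (k:ℝ)/(n:ℝ)) ^ k * Real.exp (-((n:ℝ) * p * p + (n:ℝ) * q * q))) *
        (((n:ℝ) * p) ^ j * ((n:ℝ) * q) ^ (k - j) * (k.choose j : ℝ))
      = (k.choose j : ℝ) * ((((n:ℝ) * p) ^ j * (1 - (k:ℝ)/(n:ℝ)) ^ j * Real.exp (-((n:ℝ) * p * p))) *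
          (((n:ℝ) * q) ^ (k - j) * (1 - (k:ℝ)/(n:ℝ)) ^ (k - j) * Real.exp (-((n:ℝ) * q * q)))) := by
        rw [← hpowk, ← hexp2]; ring
    _ ≤ (k.choose j : ℝ) * ((binomProb n p j * Real.exp ((n:ℝ) * p) * (j.factorial : ℝ)) *
          (binomProb n q (k - j) * Real.exp ((n:ℝ) * q) * ((k - j).factorial : ℝ))) :=
        mul_le_mul_of_nonneg_left h12 (by positivity)
    _ = binomProb n p j * binomProb n q (k - j) * (k.factorial : ℝ) *
          Real.exp ((n:ℝ) * p + (n:ℝ) * q) := by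
        rw [hf, Real.exp_add]; ring

lemma sum_bounds (n k : ℕ) (p q : ℝ) (hn : 0 < n) (hp0 : 0 ≤ p) (hp5 : p ≤ 1/5)
    (hq0 : 0 ≤ q) (hq5 : q ≤ 1/5) (hkn : k ≤ n) :
    ((1 - (k:ℝ)/(n:ℝ)) ^ k * Real.exp (-((n:ℝ)*p*p + (n:ℝ)*q*q))) * ((n:ℝ)*p + (n:ℝ)*q) ^ k ≤
      prSumEq n p q k * (k.factorial : ℝ) * Real.exp ((n:ℝ)*p + (n:ℝ)*q) ∧
    prSumEq n p q k * (k.factorial : ℝ) * Real.exp ((n:ℝ)*p + (n:ℝ)*q) ≤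
      Real.exp ((k:ℝ)*(p+q)) * ((n:ℝ)*p + (n:ℝ)*q) ^ k := by
  have hadd : ((n:ℝ)*p + (n:ℝ)*q) ^ k =
      ∑ j ∈ Finset.range (k+1), ((n:ℝ)*p) ^ j * ((n:ℝ)*q) ^ (k-j) * (k.choose j : ℝ) := by
    rw [add_pow]
  constructor
  · rw [prSumEq, Finset.sum_mul, Finset.sum_mul, hadd, Finset.mul_sum]
    apply Finset.sum_le_sum
    intro j hj
    exact pair_lower n j k p q hn hp0 hp5 hq0 hq5 (Nat.lt_succ_iff.mp (Finset.mem_range.mp hj)) hkn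
  · rw [prSumEq, Finset.sum_mul, Finset.sum_mul, hadd, Finset.mul_sum]
    apply Finset.sum_le_sum
    intro j hj
    exact pair_upper n j k p q hp0 (by linarith) hq0 (by linarith)
      (Nat.lt_succ_iff.mp (Finset.mem_range.mp hj))

set_option maxHeartbeats 1000000 in
lemma main_good (C : ℝ) (hC : 0 < C) (n k : ℕ) (A B : ℝ)
    (ha1 : C⁻¹ ≤ A) (ha2 : A ≤ C) (hb1 : C⁻¹ ≤ B) (hb2 : B ≤ C)
    (hn2 : 2 ≤ n) (h15 : C * Real.log n / (n:ℝ) ≤ 1/5) (h20 : 20 * C * Real.log n ≤ (n:ℝ))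
    (hk : (k:ℝ) ≤ 10 * (A + B) * Real.log n) :
    |prSumEq n (A * Real.log n / n) (B * Real.log n / n) k * (k.factorial : ℝ) *
        (n:ℝ) ^ (A + B) / ((A + B) * Real.log n) ^ k - 1| ≤
      (Real.exp (40*C^2*((Real.log n)^2/(n:ℝ))) - 1) +
        (1 - (1 - 400*C^2*((Real.log n)^2/(n:ℝ))) *
          Real.exp (-(2*C^2*((Real.log n)^2/(n:ℝ))))) := by
  set L := Real.log n with hL_def
  set p : ℝ := A * L / n with hp_def
  set q : ℝ := B * L / n with hq_def
  have hn1 : (1:ℝ) < (n:ℝ) := by exact_mod_cast lt_of_lt_of_le (by norm_num) hn2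
  have hn0 : (0:ℝ) < (n:ℝ) := by linarith
  have hnne : (n:ℝ) ≠ 0 := hn0.ne'
  have hL : 0 < L := Real.log_pos hn1
  have hCinv : 0 < C⁻¹ := by positivity
  have hA0 : 0 < A := lt_of_lt_of_le hCinv ha1
  have hB0 : 0 < B := lt_of_lt_of_le hCinv hb1
  have hp0 : 0 ≤ p := by rw [hp_def]; positivity
  have hq0 : 0 ≤ q := by rw [hq_def]; positivity
  have hp5 : p ≤ 1/5 := by
    rw [hp_def]
    calc A * L / (n:ℝ) ≤ C * L / (n:ℝ) := by
          rw [div_le_div_iff_of_pos_right hn0]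
          exact mul_le_mul_of_nonneg_right ha2 hL.le
      _ ≤ 1/5 := h15
  have hq5 : q ≤ 1/5 := by
    rw [hq_def]
    calc B * L / (n:ℝ) ≤ C * L / (n:ℝ) := by
          rw [div_le_div_iff_of_pos_right hn0]
          exact mul_le_mul_of_nonneg_right hb2 hL.le
      _ ≤ 1/5 := h15
  have hk20 : (k:ℝ) ≤ 20 * C * L := by nlinarith [hL.le]
  have hknR : (k:ℝ) ≤ (n:ℝ) := le_trans hk20 h20
  have hkn : k ≤ n := by exact_mod_cast hknR
  have hnposn : 0 < n := by omega
  have hnp : (n:ℝ) * p = A * L := by rw [hp_def]; field_simp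
  have hnq : (n:ℝ) * q = B * L := by rw [hq_def]; field_simp
  have hpq : (n:ℝ) * p + (n:ℝ) * q = (A + B) * L := by rw [hnp, hnq]; ring
  have hrpow : (n:ℝ) ^ (A + B) = Real.exp ((A + B) * L) := by
    rw [Real.rpow_def_of_pos hn0, ← hL_def]; congr 1; ring
  obtain ⟨hlow, hup⟩ := sum_bounds n k p q hnposn hp0 hp5 hq0 hq5 hkn
  rw [hpq] at hlow hup
  set D : ℝ := ((A + B) * L) ^ k with hD_def
  have hD : 0 < D := by rw [hD_def]; positivity
  set X : ℝ := prSumEq n p q k * (k.factorial : ℝ) * (n:ℝ) ^ (A + B) with hX_def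
  have hXlow : ((1 - (k:ℝ)/(n:ℝ)) ^ k * Real.exp (-((n:ℝ)*p*p + (n:ℝ)*q*q))) * D ≤ X := by
    rw [hX_def, hrpow]; exact hlow
  have hXup : X ≤ Real.exp ((k:ℝ)*(p+q)) * D := by
    rw [hX_def, hrpow]; exact hup
  clear hlow hup
  -- upper bound on the exponential factor
  have hHi : Real.exp ((k:ℝ)*(p+q)) ≤ Real.exp (40*C^2*(L^2/(n:ℝ))) := by
    apply Real.exp_le_exp.mpr
    have hpq2 : p + q = (A+B)*L/(n:ℝ) := by rw [hp_def, hq_def]; ring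
    have hnum : (k:ℝ) * ((A+B)*L) ≤ 40*C^2*L^2 := by
      have h1 : (0:ℝ) ≤ (A+B)*L := mul_nonneg (by linarith) hL.le
      have h2 : (0:ℝ) ≤ 20*C*L := mul_nonneg (by linarith) hL.le
      have h3 : (A+B)*L ≤ 2*C*L := mul_le_mul_of_nonneg_right (by linarith) hL.le
      nlinarith [mul_le_mul hk20 h3 h1 h2]
    calc (k:ℝ)*(p+q) = ((k:ℝ) * ((A+B)*L))/(n:ℝ) := by rw [hpq2]; ring
      _ ≤ (40*C^2*L^2)/(n:ℝ) := by rw [div_le_div_iff_of_pos_right hn0]; exact hnum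
      _ = 40*C^2*(L^2/(n:ℝ)) := by ring
  -- lower bound on the prefactor
  have h1kn : (0:ℝ) ≤ 1 - (k:ℝ)/(n:ℝ) := by
    rw [sub_nonneg, div_le_one hn0]; exact hknR
  have hLo : (1 - 400*C^2*(L^2/(n:ℝ))) * Real.exp (-(2*C^2*(L^2/(n:ℝ)))) ≤
      (1 - (k:ℝ)/(n:ℝ)) ^ k * Real.exp (-((n:ℝ)*p*p + (n:ℝ)*q*q)) := by
    have hx0 : (0:ℝ) ≤ (1 - (k:ℝ)/(n:ℝ)) ^ k := pow_nonneg h1kn k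
    have hxu : 1 - 400*C^2*(L^2/(n:ℝ)) ≤ (1 - (k:ℝ)/(n:ℝ)) ^ k := by
      have hber : 1 + (k:ℝ) * (-((k:ℝ)/(n:ℝ))) ≤ (1 + -((k:ℝ)/(n:ℝ))) ^ k := by
        apply one_add_mul_le_pow
        have : (k:ℝ)/(n:ℝ) ≤ 1 := by rw [div_le_one hn0]; exact hknR
        linarith
      have heq : (1 + -((k:ℝ)/(n:ℝ))) = (1 - (k:ℝ)/(n:ℝ)) := by ring
      rw [heq] at hber
      have hk2 : (k:ℝ)^2 ≤ 400*C^2*L^2 := by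
        have hkn0 : (0:ℝ) ≤ (k:ℝ) := Nat.cast_nonneg k
        have h2 : (0:ℝ) ≤ 20*C*L := mul_nonneg (by linarith) hL.le
        nlinarith [mul_le_mul hk20 hk20 hkn0 h2]
      have hdiv : (k:ℝ)^2/(n:ℝ) ≤ (400*C^2*L^2)/(n:ℝ) := by
        rw [div_le_div_iff_of_pos_right hn0]; exact hk2
      have : 1 + (k:ℝ) * (-((k:ℝ)/(n:ℝ))) = 1 - (k:ℝ)^2/(n:ℝ) := by ring
      rw [this] at hber
      calc 1 - 400*C^2*(L^2/(n:ℝ)) = 1 - (400*C^2*L^2)/(n:ℝ) := by ring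
        _ ≤ 1 - (k:ℝ)^2/(n:ℝ) := by linarith
        _ ≤ (1 - (k:ℝ)/(n:ℝ)) ^ k := hber
    have hE : Real.exp (-(2*C^2*(L^2/(n:ℝ)))) ≤ Real.exp (-((n:ℝ)*p*p + (n:ℝ)*q*q)) := by
      apply Real.exp_le_exp.mpr
      have he : (n:ℝ)*p*p + (n:ℝ)*q*q = (A^2 + B^2)*(L^2/(n:ℝ)) := by
        rw [hp_def, hq_def]; field_simp
      have hAB2 : A^2 + B^2 ≤ 2*C^2 := by nlinarith
      have hL2n : (0:ℝ) ≤ L^2/(n:ℝ) := by positivity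
      rw [he]
      have := mul_le_mul_of_nonneg_right hAB2 hL2n
      linarith
    exact mul_le_mul hxu hE (Real.exp_pos _).le hx0
  have hXlow' : (1 - 400*C^2*(L^2/(n:ℝ))) * Real.exp (-(2*C^2*(L^2/(n:ℝ)))) * D ≤ X :=
    le_trans (mul_le_mul_of_nonneg_right hLo hD.le) hXlow
  have hXup' : X ≤ Real.exp (40*C^2*(L^2/(n:ℝ))) * D :=
    le_trans hXup (mul_le_mul_of_nonneg_right hHi hD.le)
  have hgoal1 : X / D ≤ Real.exp (40*C^2*(L^2/(n:ℝ))) := by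
    rw [div_le_iff₀ hD]; exact hXup'
  have hgoal2 : (1 - 400*C^2*(L^2/(n:ℝ))) * Real.exp (-(2*C^2*(L^2/(n:ℝ)))) ≤ X / D := by
    rw [le_div_iff₀ hD]; exact hXlow'
  have hHi1 : 1 ≤ Real.exp (40*C^2*(L^2/(n:ℝ))) := Real.one_le_exp (by positivity)
  have hLo1 : (1 - 400*C^2*(L^2/(n:ℝ))) * Real.exp (-(2*C^2*(L^2/(n:ℝ)))) ≤ 1 := by
    have h1 : Real.exp (-(2*C^2*(L^2/(n:ℝ)))) ≤ 1 := Real.exp_le_one_iff.mpr (neg_nonpos.mpr (by positivity))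
    have h2 : (0:ℝ) < Real.exp (-(2*C^2*(L^2/(n:ℝ)))) := Real.exp_pos _
    nlinarith [mul_nonneg (show (0:ℝ) ≤ 400*C^2*(L^2/(n:ℝ)) by positivity) h2.le]
  rw [abs_le]
  constructor
  · linarith
  · linarith

theorem poisson_approximation_of_sum
    (C : ℝ) (hC : 0 < C) (a b : ℕ → ℝ)
    (hab : ∀ᶠ n : ℕ in atTop, C⁻¹ ≤ a n ∧ a n ≤ C ∧ C⁻¹ ≤ b n ∧ b n ≤ C) :
    ∃ ε : ℕ → ℝ, Tendsto ε atTop (nhds 0) ∧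
      ∀ n k : ℕ, (k : ℝ) ≤ 10 * (a n + b n) * Real.log n →
        |prSumEq n (a n * Real.log n / n) (b n * Real.log n / n) k *
            (k.factorial : ℝ) * (n : ℝ) ^ (a n + b n) /
            ((a n + b n) * Real.log n) ^ k - 1| ≤ ε n := by
  classical
  have hlog : Tendsto (fun n : ℕ => Real.log n / (n:ℝ)) atTop (nhds 0) := by
    have h := (Real.tendsto_pow_log_div_mul_add_atTop 1 0 1 one_ne_zero).comp
      tendsto_natCast_atTop_atTop
    refine h.congr fun n => ?_
    simp [Function.comp]
  have hlog2 : Tendsto (fun n : ℕ => (Real.log n)^2 / (n:ℝ)) atTop (nhds 0) := by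
    have h := (Real.tendsto_pow_log_div_mul_add_atTop 1 0 2 one_ne_zero).comp
      tendsto_natCast_atTop_atTop
    refine h.congr fun n => ?_
    simp [Function.comp]
  set δ : ℝ := min (1/(5*C)) (1/(20*C)) with hδ
  have hδpos : 0 < δ := by
    apply lt_min <;> positivity
  have hEv : ∀ᶠ n : ℕ in atTop,
      (C⁻¹ ≤ a n ∧ a n ≤ C ∧ C⁻¹ ≤ b n ∧ b n ≤ C) ∧ 2 ≤ n ∧
        C * Real.log n / (n:ℝ) ≤ 1/5 ∧ 20 * C * Real.log n ≤ (n:ℝ) := by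
    filter_upwards [hab, eventually_ge_atTop 2, hlog.eventually_lt_const hδpos]
      with n h1 h2 h3
    have hn1 : (1:ℝ) ≤ (n:ℝ) := by exact_mod_cast le_trans (by norm_num) h2
    have hn0 : (0:ℝ) < (n:ℝ) := by linarith
    have hlogn : 0 ≤ Real.log n := Real.log_nonneg hn1
    have hd1 : Real.log n / (n:ℝ) ≤ 1/(5*C) := le_trans h3.le (min_le_left _ _)
    have hd2 : Real.log n / (n:ℝ) ≤ 1/(20*C) := le_trans h3.le (min_le_right _ _)
    refine ⟨h1, h2, ?_, ?_⟩
    · calc C * Real.log n / (n:ℝ) = C * (Real.log n / (n:ℝ)) := by ring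
        _ ≤ C * (1/(5*C)) := mul_le_mul_of_nonneg_left hd1 hC.le
        _ = 1/5 := by field_simp
    · have h20 : 20*C*(Real.log n/(n:ℝ)) ≤ 1 := by
        calc 20*C*(Real.log n/(n:ℝ)) ≤ 20*C*(1/(20*C)) :=
              mul_le_mul_of_nonneg_left hd2 (by positivity)
          _ = 1 := by field_simp
      calc 20*C*Real.log n = (20*C*(Real.log n/(n:ℝ))) * (n:ℝ) := by field_simp
        _ ≤ 1 * (n:ℝ) := mul_le_mul_of_nonneg_right h20 hn0.le
        _ = (n:ℝ) := one_mul _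
  obtain ⟨n₀, hn₀⟩ := eventually_atTop.mp hEv
  refine ⟨fun n => if n < n₀ then
      (∑ k ∈ Finset.range (⌊10 * (a n + b n) * Real.log n⌋₊ + 1),
        |prSumEq n (a n * Real.log n / n) (b n * Real.log n / n) k * (k.factorial : ℝ) *
          (n:ℝ) ^ (a n + b n) / ((a n + b n) * Real.log n) ^ k - 1|)
    else
      ((Real.exp (40*C^2*((Real.log n)^2/(n:ℝ))) - 1) +
        (1 - (1 - 400*C^2*((Real.log n)^2/(n:ℝ))) *
          Real.exp (-(2*C^2*((Real.log n)^2/(n:ℝ)))))), ?_, ?_⟩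
  · have hF : Tendsto (fun x : ℝ => (Real.exp (40*C^2*x) - 1) +
        (1 - (1 - 400*C^2*x) * Real.exp (-(2*C^2*x)))) (nhds 0) (nhds 0) := by
      have hcont : Continuous (fun x : ℝ => (Real.exp (40*C^2*x) - 1) +
          (1 - (1 - 400*C^2*x) * Real.exp (-(2*C^2*x)))) := by
        continuity
      have h := hcont.tendsto 0
      simpa using h
    refine Tendsto.congr' ?_ (hF.comp hlog2)
    filter_upwards [eventually_ge_atTop n₀] with n hn
    rw [if_neg (not_lt.mpr hn)]
    rfl
  · intro n k hk
    by_cases hcase : n < n₀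
    · dsimp only
      rw [if_pos hcase]
      have hmem : k ∈ Finset.range (⌊10 * (a n + b n) * Real.log n⌋₊ + 1) :=
        Finset.mem_range.mpr (Nat.lt_succ_of_le (Nat.le_floor hk))
      exact Finset.single_le_sum
        (f := fun i => |prSumEq n (a n * Real.log n / n) (b n * Real.log n / n) i *
          (i.factorial : ℝ) * (n:ℝ) ^ (a n + b n) / ((a n + b n) * Real.log n) ^ i - 1|)
        (fun i _ => abs_nonneg _) hmem
    · dsimp only
      rw [if_neg hcase]
      obtain ⟨⟨ha1, ha2, hb1, hb2⟩, hn2, h15, h20⟩ := hn₀ n (not_lt.mp hcase)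
      exact main_good C hC n k (a n) (b n) ha1 ha2 hb1 hb2 hn2 h15 h20 hk
end

section
/- Let C > 0 and K > 0 be constants and let a_n be a sequence with C^{-1} ≤ a_n ≤ C for all sufficiently large n. Set p_n = a_n (log n)/n and let X ~ Binomial(n, p_n). Then there is a sequence ε_n → 0 such that for every integer k with 0 ≤ k ≤ K log n, |Pr(X = k) · k! · n^{a_n} / (a_n log n)^k − 1| ≤ ε_n. -/
open Real Filter

lemma aux_log_upper {x : ℝ} (h0 : 0 ≤ x) (h1 : x ≤ 1/2) : Real.log (1-x) ≤ -x := by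
  have := Real.log_le_sub_one_of_pos (show (0:ℝ) < 1 - x by linarith)
  linarith

lemma aux_log_lower {x : ℝ} (h0 : 0 ≤ x) (h1 : x ≤ 1/2) : -(2*x) ≤ Real.log (1-x) := by
  have hx : (0:ℝ) < 1 - x := by linarith
  have h := Real.log_le_sub_one_of_pos (show (0:ℝ) < (1-x)⁻¹ by positivity)
  rw [Real.log_inv] at h
  have hinv : (1-x)⁻¹ ≤ 1 + 2*x := by
    rw [inv_le_iff_one_le_mul₀ hx]; nlinarith
  linarith

lemma aux_log_add {x : ℝ} (h0 : 0 ≤ x) (h1 : x ≤ 1/2) : -(2*x^2) ≤ Real.log (1-x) + x := by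
  have hx : (0:ℝ) < 1 - x := by linarith
  have h := Real.log_le_sub_one_of_pos (show (0:ℝ) < (1-x)⁻¹ by positivity)
  rw [Real.log_inv] at h
  have hinv : (1-x)⁻¹ ≤ 1 + x + 2*x^2 := by
    rw [inv_le_iff_one_le_mul₀ hx]; nlinarith
  linarith

lemma aux_exp_abs {t d : ℝ} (h : |t| ≤ d) : |Real.exp t - 1| ≤ Real.exp d - 1 := by
  rw [abs_le] at h
  have h1 := Real.add_one_le_exp t
  have h2 := Real.add_one_le_exp d
  have h3 := Real.exp_le_exp.mpr h.2
  rw [abs_le]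
  constructor <;> linarith

set_option maxHeartbeats 1000000 in
lemma core_bound (C K : ℝ) (hC : 0 < C) (hK : 0 < K) (A : ℝ) (n k : ℕ)
    (hA1 : C⁻¹ ≤ A) (hA2 : A ≤ C) (hn3 : 3 ≤ n)
    (hKn : K * Real.log n ≤ n/2) (hCn : C * Real.log n ≤ n/2)
    (hk : (k:ℝ) ≤ K * Real.log n) :
    |binomProb n (A * Real.log n / n) k * (k.factorial : ℝ) * (n:ℝ)^A
      / (A * Real.log n)^k - 1|
      ≤ Real.exp (2*(K+C)^2 * ((Real.log n)^2 / n)) - 1 := by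
  have hn0 : (0:ℝ) < n := by
    have : (3:ℝ) ≤ n := by exact_mod_cast hn3
    linarith
  set L := Real.log n with hLdef
  have hL0 : 0 < L := Real.log_pos (by exact_mod_cast Nat.lt_of_lt_of_le (by norm_num) hn3)
  have hA0 : 0 < A := lt_of_lt_of_le (inv_pos.mpr hC) hA1
  set p := A * L / n with hpdef
  have hp0 : 0 < p := by positivity
  have hpA : p ≤ C * L / n := by
    rw [hpdef]; gcongr
  have hp2 : p ≤ 1/2 := by
    rw [hpdef, div_le_iff₀ hn0]
    have : A*L ≤ C*L := mul_le_mul_of_nonneg_right hA2 hL0.le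
    linarith
  have hkn : (k:ℝ) ≤ (n:ℝ)/2 := hk.trans hKn
  have hknn : k ≤ n := by
    have : (k:ℝ) ≤ (n:ℝ) := by linarith
    exact_mod_cast this
  have h1p : (0:ℝ) < 1 - p := by linarith
  -- key identity
  have hrpow : (n:ℝ)^A = Real.exp (A*L) := by
    rw [Real.rpow_def_of_pos hn0, mul_comm]
  have hdesc : (n.choose k : ℝ) * (k.factorial:ℝ) = ∏ i ∈ Finset.range k, ((n:ℝ) - i) := by
    have h := Nat.descFactorial_eq_factorial_mul_choose n k
    have h2 : ((n.descFactorial k : ℕ):ℝ) = (k.factorial:ℝ) * (n.choose k:ℝ) := by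
      exact_mod_cast congrArg (Nat.cast (R := ℝ)) h
    rw [mul_comm, ← h2, Nat.descFactorial_eq_prod_range, Nat.cast_prod]
    exact Finset.prod_congr rfl fun i hi =>
      Nat.cast_sub (le_trans (Nat.le_of_lt (Finset.mem_range.mp hi)) hknn)
  have hfac : ∀ i ∈ Finset.range k, (0:ℝ) < 1 - (i:ℝ)/n := by
    intro i hi
    have hik : (i:ℝ) < k := by exact_mod_cast Finset.mem_range.mp hi
    have : (i:ℝ)/n < 1/2 := by
      rw [div_lt_iff₀ hn0]; linarith
    linarith
  have key : binomProb n p k * (k.factorial : ℝ) * (n:ℝ)^A / (A * L)^k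
      = (∏ i ∈ Finset.range k, (1 - (i:ℝ)/n)) * (1-p)^(n-k) * Real.exp (A*L) := by
    have hALne : (A*L) ≠ 0 := by positivity
    have hnne : (n:ℝ) ≠ 0 := ne_of_gt hn0
    have hprod : (∏ i ∈ Finset.range k, (1 - (i:ℝ)/n))
        = (∏ i ∈ Finset.range k, ((n:ℝ) - i)) / (n:ℝ)^k := by
      have hcg : ∀ i ∈ Finset.range k, (1 - (i:ℝ)/n) = ((n:ℝ) - i)/n := by
        intro i hi; field_simp
      rw [Finset.prod_congr rfl hcg, Finset.prod_div_distrib, Finset.prod_const,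
        Finset.card_range]
    rw [binomProb, hrpow, hprod, ← hdesc]
    rw [hpdef]
    field_simp
    rw [div_pow, mul_div_assoc', div_mul_eq_mul_div, div_mul_cancel₀ _ (pow_ne_zero _ hnne)]
    ring
  rw [key]
  set E := (∏ i ∈ Finset.range k, (1 - (i:ℝ)/n)) * (1-p)^(n-k) * Real.exp (A*L) with hEdef
  clear key
  -- positivity
  have hprodpos : 0 < ∏ i ∈ Finset.range k, (1 - (i:ℝ)/n) := Finset.prod_pos hfac
  have hEpos : 0 < E := by
    rw [hEdef]
    exact mul_pos (mul_pos hprodpos (pow_pos h1p _)) (Real.exp_pos _)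
  -- log computation
  have hlogE : Real.log E = (∑ i ∈ Finset.range k, Real.log (1 - (i:ℝ)/n))
      + ((n:ℝ) - k) * Real.log (1-p) + A*L := by
    rw [hEdef,
      Real.log_mul (ne_of_gt (mul_pos hprodpos (pow_pos h1p _))) (Real.exp_ne_zero _),
      Real.log_mul (ne_of_gt hprodpos) (pow_ne_zero _ (ne_of_gt h1p)),
      Real.log_prod (fun i hi => ne_of_gt (hfac i hi)), Real.log_pow, Real.log_exp,
      Nat.cast_sub hknn]
  -- bounds
  set S := ∑ i ∈ Finset.range k, Real.log (1 - (i:ℝ)/n) with hSdef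
  have hAL : A * L ≤ C * L := mul_le_mul_of_nonneg_right hA2 hL0.le
  have hSl : -(2*(K*L)^2) ≤ (n:ℝ) * S := by
    have h1 : ∀ i ∈ Finset.range k, -(2*((k:ℝ)/n)) ≤ Real.log (1 - (i:ℝ)/n) := by
      intro i hi
      have hik : (i:ℝ) < k := by exact_mod_cast Finset.mem_range.mp hi
      have hi0 : (0:ℝ) ≤ (i:ℝ)/n := by positivity
      have hi2 : (i:ℝ)/n ≤ 1/2 := by
        rw [div_le_iff₀ hn0]; linarith
      have := aux_log_lower hi0 hi2
      have hmon : (i:ℝ)/n ≤ (k:ℝ)/n := by gcongr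
      linarith
    have h2 := Finset.sum_le_sum h1
    rw [Finset.sum_const, Finset.card_range, nsmul_eq_mul, ← hSdef] at h2
    have h3 := mul_le_mul_of_nonneg_left h2 hn0.le
    have h4 : (n:ℝ) * ((k:ℝ) * -(2*((k:ℝ)/n))) = -(2*(k:ℝ)^2) := by
      field_simp
    rw [h4] at h3
    have hsq : (k:ℝ)^2 ≤ (K*L)^2 := pow_le_pow_left₀ (Nat.cast_nonneg k) hk 2
    linarith
  have hSu : (n:ℝ) * S ≤ 0 := by
    apply mul_nonpos_of_nonneg_of_nonpos hn0.le
    apply Finset.sum_nonpos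
    intro i hi
    have hik : (i:ℝ) < k := by exact_mod_cast Finset.mem_range.mp hi
    have hi0 : (0:ℝ) ≤ (i:ℝ)/n := by positivity
    have hi2 : (i:ℝ)/n ≤ 1/2 := by
      rw [div_le_iff₀ hn0]; linarith
    have := aux_log_upper hi0 hi2
    linarith
  have hq : (n:ℝ) * p = A * L := by
    rw [hpdef]; field_simp
  have hu_up := aux_log_upper hp0.le hp2
  have hu_lo := aux_log_lower hp0.le hp2
  have hu_add := aux_log_add hp0.le hp2
  set u := Real.log (1-p) with hudef
  clear_value E u p L S
  -- middle term
  have hM_lo : -(2*(C*L)^2) ≤ (n:ℝ)^2*(u+p) := by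
    have t := mul_le_mul_of_nonneg_left hu_add (by positivity : (0:ℝ) ≤ (n:ℝ)^2)
    have e2 : (n:ℝ)^2 * (-(2*p^2)) = -(2*((n:ℝ)*p)^2) := by ring
    rw [e2, hq] at t
    have h3 : (A*L)^2 ≤ (C*L)^2 :=
      pow_le_pow_left₀ (by positivity) hAL 2
    linarith
  have hM_up : (n:ℝ)^2*(u+p) ≤ 0 := by
    have : u + p ≤ 0 := by linarith
    exact mul_nonpos_of_nonneg_of_nonpos (by positivity) this
  -- last term
  have hT_lo : 0 ≤ (n:ℝ)*(-((k:ℝ)*u)) := by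
    have hu0 : u ≤ 0 := by linarith
    have hku : (k:ℝ)*u ≤ 0 := mul_nonpos_of_nonneg_of_nonpos (Nat.cast_nonneg (α := ℝ) k) hu0
    exact mul_nonneg hn0.le (neg_nonneg.mpr hku)
  have hT_up : (n:ℝ)*(-((k:ℝ)*u)) ≤ 2*(K*L)*(C*L) := by
    have h0 : -u ≤ 2*p := by linarith
    have t1 : (k:ℝ)*(-u) ≤ (k:ℝ)*(2*p) := mul_le_mul_of_nonneg_left h0 (Nat.cast_nonneg k)
    have t2 : (n:ℝ)*((k:ℝ)*(-u)) ≤ (n:ℝ)*((k:ℝ)*(2*p)) :=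
      mul_le_mul_of_nonneg_left t1 hn0.le
    have e3 : (n:ℝ)*((k:ℝ)*(2*p)) = 2*(k:ℝ)*((n:ℝ)*p) := by ring
    rw [e3, hq] at t2
    have t3 : (k:ℝ)*(A*L) ≤ (K*L)*(C*L) :=
      mul_le_mul hk hAL (by positivity) (by positivity)
    linarith
  -- combine
  have hNlog : (n:ℝ) * Real.log E = (n:ℝ)*S + (n:ℝ)^2*(u+p) + (n:ℝ)*(-((k:ℝ)*u)) := by
    rw [hlogE]
    linear_combination (-(n:ℝ)) * hq
  have hpoly : |(n:ℝ) * Real.log E| ≤ 2*(K+C)^2*L^2 := by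
    have hKCL : (0:ℝ) ≤ K*C*L^2 := by positivity
    rw [abs_le]
    constructor
    · rw [hNlog]; linarith
    · rw [hNlog]; linarith
  have habs : |Real.log E| ≤ 2*(K+C)^2 * (L^2/n) := by
    rw [abs_le] at hpoly ⊢
    constructor
    · have d1 : (-(2*(K+C)^2*L^2))/(n:ℝ) ≤ Real.log E := by
        rw [div_le_iff₀ hn0]; linarith [hpoly.1]
      have d2 : (-(2*(K+C)^2*L^2))/(n:ℝ) = -(2*(K+C)^2*(L^2/(n:ℝ))) := by ring
      linarith [d1, d2.ge, d2.le]
    · have d1 : Real.log E ≤ (2*(K+C)^2*L^2)/(n:ℝ) := by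
        rw [le_div_iff₀ hn0]; linarith [hpoly.2]
      have d2 : (2*(K+C)^2*L^2)/(n:ℝ) = 2*(K+C)^2*(L^2/(n:ℝ)) := by ring
      linarith [d1, d2.ge, d2.le]
  calc |E - 1| = |Real.exp (Real.log E) - 1| := by rw [Real.exp_log hEpos]
  _ ≤ Real.exp (2*(K+C)^2 * (L^2/n)) - 1 := aux_exp_abs habs

theorem poisson_approximation_of_binomial
    (C K : ℝ) (hC : 0 < C) (hK : 0 < K) (a : ℕ → ℝ)
    (ha : ∀ᶠ n : ℕ in atTop, C⁻¹ ≤ a n ∧ a n ≤ C) :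
    ∃ ε : ℕ → ℝ, Tendsto ε atTop (nhds 0) ∧
      ∀ n k : ℕ, (k : ℝ) ≤ K * Real.log n →
        |binomProb n (a n * Real.log n / n) k *
            (k.factorial : ℝ) * (n : ℝ) ^ (a n) /
            (a n * Real.log n) ^ k - 1| ≤ ε n := by
  have hlog : Tendsto (fun n : ℕ => Real.log n / n) atTop (nhds 0) := by
    have h := (Real.tendsto_pow_log_div_mul_add_atTop 1 0 1 one_ne_zero).comp
      tendsto_natCast_atTop_atTop
    simpa [Function.comp_def] using h
  have key2 : ∀ M : ℝ, 0 < M → ∀ᶠ n : ℕ in atTop, M * Real.log n ≤ (n:ℝ)/2 := by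
    intro M hM
    have h1 : ∀ᶠ n : ℕ in atTop, Real.log n / n ≤ 1/(2*M) :=
      hlog.eventually (eventually_le_nhds (by positivity))
    filter_upwards [h1, eventually_ge_atTop 1] with n hn h1n
    have hn0 : (0:ℝ) < n := by exact_mod_cast Nat.lt_of_lt_of_le Nat.zero_lt_one h1n
    rw [div_le_div_iff₀ hn0 (by positivity)] at hn
    linarith
  have hQ : ∀ᶠ n : ℕ in atTop, (C⁻¹ ≤ a n ∧ a n ≤ C) ∧ 3 ≤ n ∧
      K * Real.log n ≤ (n:ℝ)/2 ∧ C * Real.log n ≤ (n:ℝ)/2 :=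
    ha.and ((eventually_ge_atTop 3).and ((key2 K hK).and (key2 C hC)))
  obtain ⟨N, hN⟩ := eventually_atTop.mp hQ
  refine ⟨fun n => if n < N then
      (∑ j ∈ Finset.range (⌊K * Real.log n⌋₊ + 1),
        |binomProb n (a n * Real.log n / n) j * (j.factorial : ℝ) * (n : ℝ) ^ (a n) /
          (a n * Real.log n) ^ j - 1|)
    else (Real.exp (2*(K+C)^2 * ((Real.log n)^2 / n)) - 1), ?_, ?_⟩
  · have hd : Tendsto (fun n : ℕ => 2*(K+C)^2 * ((Real.log n)^2 / n)) atTop (nhds 0) := by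
      have h := (Real.tendsto_pow_log_div_mul_add_atTop 1 0 2 one_ne_zero).comp
        tendsto_natCast_atTop_atTop
      have h2 := h.const_mul (2*(K+C)^2)
      simp only [Function.comp] at h2 ⊢
      simpa [mul_comm] using h2
    have he : Tendsto (fun n : ℕ => Real.exp (2*(K+C)^2 * ((Real.log n)^2 / n)) - 1)
        atTop (nhds 0) := by
      have h3 := (Real.continuous_exp.tendsto 0).comp hd
      have h4 := h3.sub (tendsto_const_nhds (x := (1:ℝ)))
      simpa using h4
    apply Tendsto.congr' ?_ he
    filter_upwards [eventually_ge_atTop N] with n hn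
    simp [Nat.not_lt.mpr hn]
  · intro n k hk
    by_cases hcase : n < N
    · simp only [if_pos hcase]
      apply Finset.single_le_sum (f := fun j =>
        |binomProb n (a n * Real.log n / n) j * (j.factorial : ℝ) * (n : ℝ) ^ (a n) /
          (a n * Real.log n) ^ j - 1|) (fun i _ => abs_nonneg _)
      exact Finset.mem_range.mpr (Nat.lt_succ_of_le (Nat.le_floor hk))
    · simp only [if_neg hcase]
      obtain ⟨⟨hA1, hA2⟩, hn3, hKn, hCn⟩ := hN n (Nat.le_of_not_lt hcase)
      exact core_bound C K hC hK (a n) n k hA1 hA2 hn3 hKn hCn hk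
end

section
/- Let C > 0 be a constant and let q_n be a sequence with q_n ≤ 2/3 and n q_n / log^3 n → ∞. Let Y ~ Binomial(n, q_n), let σ_n = √(q_n(1−q_n)), and let φ(x) = (2π)^{-1/2} e^{-x^2/2}. Then there is a sequence ε_n → 0 such that for every integer k with |k − n q_n| ≤ C √(n log n) σ_n, |Pr(Y = k) · √n σ_n / φ((k − n q_n)/(√n σ_n)) − 1| ≤ ε_n. -/
open Real Filter

open Topology Stirling

lemma sqrt_pi_le_stirlingSeq (n : ℕ) (hn : 1 ≤ n) : Real.sqrt π ≤ stirlingSeq n := by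
  obtain ⟨m, rfl⟩ := Nat.exists_eq_add_of_le hn
  have h : Tendsto (stirlingSeq ∘ Nat.succ) atTop (𝓝 (Real.sqrt π)) :=
    tendsto_stirlingSeq_sqrt_pi.comp (tendsto_add_atTop_nat 1)
  have := stirlingSeq'_antitone.le_of_tendsto h m
  simpa [Nat.succ_eq_add_one, Nat.add_comm] using this

lemma stirling_tele (j : ℕ) (hj : 1 ≤ j) : ∀ N : ℕ,
    Real.log (stirlingSeq (j+1)) - Real.log (stirlingSeq (j+N+1)) ≤
      1/(4*(j:ℝ)) - 1/(4*((j:ℝ)+N)) := by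
  intro N
  induction N with
  | zero => simp
  | succ N ih =>
    have h2 := log_stirlingSeq_sub_log_stirlingSeq_succ (j+N)
    have hj1 : (1:ℝ) ≤ (j:ℝ) := by exact_mod_cast hj
    have key : 1/(4*(↑(j+N+1):ℝ)^2) ≤ 1/(4*((j:ℝ)+N)) - 1/(4*((j:ℝ)+(N+1))) := by
      push_cast
      rw [div_sub_div _ _ (by positivity) (by positivity), div_le_div_iff₀ (by positivity) (by positivity)]
      ring_nf
      nlinarith [Nat.cast_nonneg (α := ℝ) N]
    have : (j + (N+1) + 1) = (j + N + 1) + 1 := by ring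
    rw [this]
    push_cast at key ⊢
    have h2' : Real.log (stirlingSeq (j+N+1)) - Real.log (stirlingSeq (j+N+1+1)) ≤
        1/(4*(↑(j+N+1):ℝ)^2) := by
      have := log_stirlingSeq_sub_log_stirlingSeq_succ (j+N+1)
      convert this using 3 <;> push_cast <;> ring
    push_cast at h2'
    linarith

lemma stirlingSeq_le (n : ℕ) (hn : 1 ≤ n) :
    stirlingSeq n ≤ Real.sqrt π * Real.exp (1/n) := by
  have hpi : (0:ℝ) < Real.sqrt π := Real.sqrt_pos.2 pi_pos
  rcases Nat.lt_or_ge n 2 with h2 | h2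
  · have hn1 : n = 1 := by omega
    subst hn1
    rw [stirlingSeq_one]
    have hs2 : (1:ℝ) ≤ Real.sqrt 2 := Real.one_le_sqrt.2 (by norm_num)
    have h1 : Real.exp 1 / Real.sqrt 2 ≤ Real.exp 1 :=
      div_le_self (Real.exp_pos 1).le hs2
    have hspi : (1:ℝ) ≤ Real.sqrt π := Real.one_le_sqrt.2 (by linarith [pi_gt_three])
    calc Real.exp 1 / Real.sqrt 2 ≤ Real.exp 1 := h1
      _ = 1 * Real.exp ((1:ℝ)/(1:ℕ)) := by norm_num
      _ ≤ Real.sqrt π * Real.exp ((1:ℝ)/(1:ℕ)) := by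
          apply mul_le_mul_of_nonneg_right hspi (Real.exp_pos _).le
  · -- n = j+1 with j ≥ 1
    obtain ⟨j, rfl⟩ : ∃ j, n = j + 1 := ⟨n - 1, by omega⟩
    have hj : 1 ≤ j := by omega
    have hjR : (1:ℝ) ≤ (j:ℝ) := by exact_mod_cast hj
    -- limit of log stirlingSeq (j+N+1) is log √π
    have hlim : Tendsto (fun N : ℕ => Real.log (stirlingSeq (j+N+1))) atTop
        (𝓝 (Real.log (Real.sqrt π))) := by
      have : Tendsto (fun N : ℕ => stirlingSeq (j+N+1)) atTop (𝓝 (Real.sqrt π)) := by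
        have := tendsto_stirlingSeq_sqrt_pi.comp (tendsto_add_atTop_nat (j+1))
        simpa [Function.comp_def, Nat.add_comm, Nat.add_assoc, Nat.add_left_comm] using this
      exact ((Real.continuousAt_log hpi.ne').tendsto.comp this)
    have hlim2 : Tendsto (fun N : ℕ => 1/(4*(j:ℝ)) - 1/(4*((j:ℝ)+N))) atTop
        (𝓝 (1/(4*(j:ℝ)) - 0)) := by
      apply Tendsto.const_sub
      have : Tendsto (fun N : ℕ => 4*((j:ℝ)+N)) atTop atTop := by
        apply Tendsto.const_mul_atTop (by norm_num : (0:ℝ) < 4)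
        exact tendsto_atTop_add_const_left _ _ tendsto_natCast_atTop_atTop
      have h0 := this.inv_tendsto_atTop
      refine h0.congr (fun N => ?_)
      simp [Pi.inv_apply, one_div]
    have key : Real.log (stirlingSeq (j+1)) - Real.log (Real.sqrt π) ≤ 1/(4*(j:ℝ)) := by
      have := le_of_tendsto_of_tendsto' (Tendsto.const_sub (Real.log (stirlingSeq (j+1))) hlim) hlim2
        (fun N => stirling_tele j hj N)
      simpa using this
    have hs : 0 < stirlingSeq (j+1) := stirlingSeq'_pos j
    have : Real.log (stirlingSeq (j+1)) ≤ Real.log (Real.sqrt π) + 1/(j+1 : ℝ) := by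
      have h14 : 1/(4*(j:ℝ)) ≤ 1/((j:ℝ)+1) := by
        rw [div_le_div_iff₀ (by positivity) (by positivity)]
        linarith
      linarith
    calc stirlingSeq (j+1) = Real.exp (Real.log (stirlingSeq (j+1))) := (Real.exp_log hs).symm
      _ ≤ Real.exp (Real.log (Real.sqrt π) + 1/(j+1:ℝ)) := Real.exp_le_exp.2 this
      _ = Real.sqrt π * Real.exp (1/(j+1:ℝ)) := by rw [Real.exp_add, Real.exp_log hpi]
      _ = Real.sqrt π * Real.exp (1/(↑(j+1):ℝ)) := by push_cast; ring

lemma log_factorial_eq (j : ℕ) (hj : 1 ≤ j) :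
    Real.log (Nat.factorial j : ℝ) = Real.log (stirlingSeq j) + (1/2)*Real.log (2*j)
      + j*Real.log j - j := by
  have h := log_stirlingSeq_formula j
  have hj0 : (0:ℝ) < j := by exact_mod_cast hj
  have hje : Real.log ((j:ℝ) / Real.exp 1) = Real.log j - 1 := by
    rw [Real.log_div hj0.ne' (Real.exp_ne_zero 1), Real.log_exp]
  rw [hje] at h
  linarith [h]

lemma taylor_log_quad (y : ℝ) (hy : |y| ≤ 1/2) :
    |Real.log (1+y) - (y - y^2/2)| ≤ 2*|y|^3 := by
  have h1 : |(-y)| < 1 := by rw [abs_neg]; linarith [abs_nonneg y]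
  have h := Real.abs_log_sub_add_sum_range_le h1 3
  have hsum : (∑ i ∈ Finset.range 3, (-y)^(i+1)/((i:ℝ)+1)) = -y + y^2/2 - y^3/3 := by
    simp [Finset.sum_range_succ]
    ring
  rw [hsum, abs_neg, sub_neg_eq_add] at h
  norm_num at h
  have h2 : (1:ℝ) - |y| ≥ 1/2 := by linarith
  have h4 : |y|^4/(1-|y|) ≤ 2*|y|^4 := by
    rw [div_le_iff₀ (by linarith)]
    nlinarith [pow_nonneg (abs_nonneg y) 4, abs_nonneg y]
  have h5 : |Real.log (1+y) - (y - y^2/2)|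
      ≤ |(-y + y^2/2 - y^3/3) + Real.log (1+y)| + |y|^3/3 := by
    have hid : Real.log (1+y) - (y - y^2/2)
        = ((-y + y^2/2 - y^3/3) + Real.log (1+y)) + y^3/3 := by ring
    rw [hid]
    calc |((-y + y^2/2 - y^3/3) + Real.log (1+y)) + y^3/3|
        ≤ |(-y + y^2/2 - y^3/3) + Real.log (1+y)| + |y^3/3| := abs_add_le _ _
      _ = _ := by rw [abs_div, abs_pow]; norm_num
  have h6 : |y|^4 ≤ |y|^3/2 := by nlinarith [pow_nonneg (abs_nonneg y) 3]
  calc |Real.log (1+y) - (y - y^2/2)|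
      ≤ |y|^4/(1-|y|) + |y|^3/3 := le_trans h5 (by linarith)
    _ ≤ 2*|y|^4 + |y|^3/3 := by linarith
    _ ≤ 2*|y|^3 := by nlinarith [pow_nonneg (abs_nonneg y) 3]

lemma taylor_entropy (y : ℝ) (hy : |y| ≤ 1/2) :
    |(1+y)*Real.log (1+y) - y - y^2/2| ≤ 4*|y|^3 := by
  have h := taylor_log_quad y hy
  have hid : (1+y)*Real.log (1+y) - y - y^2/2
      = -y^3/2 + (1+y)*(Real.log (1+y) - (y - y^2/2)) := by ring
  rw [hid]
  have habs1 : |1+y| ≤ 3/2 := by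
    rw [abs_le] at hy ⊢; constructor <;> linarith [hy.1, hy.2]
  calc |(-y^3/2 + (1+y)*(Real.log (1+y) - (y - y^2/2)))|
      ≤ abs (-y^3/2) + abs ((1+y)*(Real.log (1+y) - (y - y^2/2))) := abs_add_le _ _
    _ = |y|^3/2 + |1+y| * |Real.log (1+y) - (y - y^2/2)| := by
        rw [abs_mul, abs_div, abs_neg, abs_pow]; norm_num
    _ ≤ |y|^3/2 + (3/2)*(2*|y|^3) := by
        have := mul_le_mul habs1 h (abs_nonneg _) (by norm_num)
        linarith
    _ ≤ 4*|y|^3 := by nlinarith [pow_nonneg (abs_nonneg y) 3]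

lemma abs_log_one_add_le (y : ℝ) (hy : |y| ≤ 1/2) : |Real.log (1+y)| ≤ 2*|y| := by
  have h := taylor_log_quad y hy
  have h2 : |y - y^2/2| ≤ |y| + |y|^2/2 := by
    calc |y - y^2/2| ≤ |y| + |y^2/2| := abs_sub _ _
      _ = |y| + |y|^2/2 := by rw [abs_div, abs_pow]; norm_num
  have h3 : |Real.log (1+y)| ≤ |y - y^2/2| + 2*|y|^3 := by
    calc |Real.log (1+y)| = |(Real.log (1+y) - (y - y^2/2)) + (y - y^2/2)| := by ring_nf
      _ ≤ |Real.log (1+y) - (y - y^2/2)| + |y - y^2/2| := abs_add_le _ _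
      _ ≤ 2*|y|^3 + |y - y^2/2| := by linarith
      _ = _ := by ring
  nlinarith [abs_nonneg y, pow_nonneg (abs_nonneg y) 2, pow_nonneg (abs_nonneg y) 3, sq_abs y]

lemma taylor_entropy_neg (y : ℝ) (hy : |y| ≤ 1/2) :
    |(1-y)*Real.log (1-y) + y - y^2/2| ≤ 4*|y|^3 := by
  have h := taylor_entropy (-y) (by rwa [abs_neg])
  rw [show (1:ℝ)+(-y) = 1-y by ring] at h
  rw [show (1-y)*Real.log (1-y) - (-y) - (-y)^2/2
      = (1-y)*Real.log (1-y) + y - y^2/2 by ring] at h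
  rwa [abs_neg] at h

lemma abs_log_one_sub_le (y : ℝ) (hy : |y| ≤ 1/2) : |Real.log (1-y)| ≤ 2*|y| := by
  have h := abs_log_one_add_le (-y) (by rwa [abs_neg])
  rw [show (1:ℝ)+(-y) = 1-y by ring, abs_neg] at h
  exact h

lemma binomProb_le_one (m : ℕ) (p : ℝ) (hp0 : 0 ≤ p) (hp1 : p ≤ 1) (j : ℕ) :
    binomProb m p j ≤ 1 := by
  rcases le_or_gt j m with hjm | hjm
  · have hsum : ∑ i ∈ Finset.range (m+1), binomProb m p i = 1 := by
      calc ∑ i ∈ Finset.range (m+1), binomProb m p i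
          = ∑ i ∈ Finset.range (m+1), p^i*(1-p)^(m-i)*((m.choose i : ℕ):ℝ) := by
            apply Finset.sum_congr rfl
            intro i _
            unfold binomProb
            ring
        _ = (p+(1-p))^m := (add_pow p (1-p) m).symm
        _ = 1 := by norm_num
    have hle : binomProb m p j ≤ ∑ i ∈ Finset.range (m+1), binomProb m p i := by
      apply Finset.single_le_sum (f := fun i => binomProb m p i)
      · intro i _
        unfold binomProb
        have h1 : (0:ℝ) ≤ 1 - p := by linarith
        positivity
      · exact Finset.mem_range.2 (by omega)
    rw [hsum] at hle
    exact hle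
  · unfold binomProb
    rw [Nat.choose_eq_zero_of_lt hjm]
    norm_num

lemma fallback_est (C : ℝ) (hC : 0 < C) (n k : ℕ) (q : ℝ)
    (hq0 : 0 ≤ q) (hq23 : q ≤ 2/3)
    (hk : |(k:ℝ) - n*q| ≤ C*Real.sqrt ((n:ℝ)*Real.log n)*Real.sqrt (q*(1-q))) :
    |binomProb n q k * (Real.sqrt n * Real.sqrt (q*(1-q))) /
        ((Real.sqrt (2*π))⁻¹ * Real.exp (-(((k:ℝ) - n*q) /
          (Real.sqrt n * Real.sqrt (q*(1-q))))^2/2)) - 1|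
      ≤ Real.sqrt (2*π) * Real.sqrt n * Real.exp (C^2*Real.log n/2) + 2 := by
  set t := (k:ℝ) - n*q with ht
  set σ := Real.sqrt (q*(1-q)) with hσ
  set x := t/(Real.sqrt n * σ) with hx
  have h2πpos : (0:ℝ) < Real.sqrt (2*π) := Real.sqrt_pos.2 (by positivity)
  have hEeq : binomProb n q k * (Real.sqrt n * σ) / ((Real.sqrt (2*π))⁻¹ * Real.exp (-x^2/2))
      = binomProb n q k * (Real.sqrt n * σ) * (Real.sqrt (2*π) * Real.exp (x^2/2)) := by
    rw [show -x^2/2 = -(x^2/2) by ring, Real.exp_neg]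
    rw [div_eq_mul_inv, mul_inv, inv_inv, inv_inv]
  rw [hEeq]
  have hlognn : 0 ≤ Real.log n := by
    rcases Nat.eq_zero_or_pos n with h0 | h1
    · simp [h0]
    · exact Real.log_nonneg (by exact_mod_cast h1)
  have h1q : (0:ℝ) ≤ 1 - q := by linarith
  have hB0 : 0 ≤ binomProb n q k := by
    unfold binomProb
    positivity
  have hB1 : binomProb n q k ≤ 1 := binomProb_le_one n q hq0 (by linarith) k
  have hσnn : 0 ≤ σ := by rw [hσ]; exact Real.sqrt_nonneg _
  have hσ1 : σ ≤ 1 := by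
    rw [hσ]
    rw [Real.sqrt_le_one]
    nlinarith
  have hxx : x^2/2 ≤ C^2*Real.log n/2 := by
    rcases eq_or_ne (Real.sqrt n * σ) 0 with hs | hs
    · rw [hx, hs, div_zero]
      norm_num
      positivity
    · have hspos : 0 < Real.sqrt n * σ :=
        lt_of_le_of_ne (mul_nonneg (Real.sqrt_nonneg _) hσnn) (Ne.symm hs)
      have habs : |x| ≤ C*Real.sqrt (Real.log n) := by
        rw [hx, abs_div, abs_of_pos hspos, div_le_iff₀ hspos]
        calc |t| ≤ C*Real.sqrt ((n:ℝ)*Real.log n)*σ := hk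
          _ = C*Real.sqrt (Real.log n)*(Real.sqrt n * σ) := by
              rw [Real.sqrt_mul (Nat.cast_nonneg n)]
              ring
      have h2 : x^2 ≤ (C*Real.sqrt (Real.log n))^2 := by
        rw [← sq_abs x]
        exact pow_le_pow_left₀ (abs_nonneg x) habs 2
      have h3 : (C*Real.sqrt (Real.log n))^2 = C^2*Real.log n := by
        rw [mul_pow, Real.sq_sqrt hlognn]
      linarith
  have hexp : Real.exp (x^2/2) ≤ Real.exp (C^2*Real.log n/2) := Real.exp_le_exp.2 hxx
  have s1 : binomProb n q k * (Real.sqrt n * σ) ≤ Real.sqrt n := by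
    calc binomProb n q k * (Real.sqrt n * σ) ≤ 1*(Real.sqrt n * σ) :=
          mul_le_mul_of_nonneg_right hB1 (mul_nonneg (Real.sqrt_nonneg _) hσnn)
      _ = Real.sqrt n * σ := one_mul _
      _ ≤ Real.sqrt n := mul_le_of_le_one_right (Real.sqrt_nonneg _) hσ1
  have s2 : Real.sqrt (2*π) * Real.exp (x^2/2) ≤ Real.sqrt (2*π) * Real.exp (C^2*Real.log n/2) :=
    mul_le_mul_of_nonneg_left hexp h2πpos.le
  have hmain : binomProb n q k * (Real.sqrt n * σ) * (Real.sqrt (2*π) * Real.exp (x^2/2))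
      ≤ Real.sqrt (2*π) * Real.sqrt n * Real.exp (C^2*Real.log n/2) := by
    calc binomProb n q k * (Real.sqrt n * σ) * (Real.sqrt (2*π) * Real.exp (x^2/2))
        ≤ Real.sqrt n * (Real.sqrt (2*π) * Real.exp (C^2*Real.log n/2)) :=
          mul_le_mul s1 s2 (by positivity)
            (Real.sqrt_nonneg _)
      _ = Real.sqrt (2*π) * Real.sqrt n * Real.exp (C^2*Real.log n/2) := by ring
  have hXnn : 0 ≤ binomProb n q k * (Real.sqrt n * σ) * (Real.sqrt (2*π) * Real.exp (x^2/2)) := by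
    apply mul_nonneg (mul_nonneg hB0 (mul_nonneg (Real.sqrt_nonneg _) hσnn))
    positivity
  have hbnn : 0 ≤ Real.sqrt (2*π) * Real.sqrt n * Real.exp (C^2*Real.log n/2) := by positivity
  rw [abs_le]
  constructor
  · linarith
  · linarith

set_option maxHeartbeats 1000000 in
lemma main_est (C : ℝ) (hC : 0 < C) (n k : ℕ) (q : ℝ)
    (hq0 : 0 < q) (hq23 : q ≤ 2/3)
    (hL : 20*(1+C) ≤ Real.log n)
    (hnq : (Real.log n)^3 ≤ (n:ℝ)*q)
    (hn : 200*(1+C^2)*Real.log n ≤ (n:ℝ))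
    (hk : |(k:ℝ) - n*q| ≤ C*Real.sqrt ((n:ℝ)*Real.log n) * Real.sqrt (q*(1-q))) :
    |binomProb n q k * (Real.sqrt n * Real.sqrt (q*(1-q))) /
        ((Real.sqrt (2*π))⁻¹ * Real.exp (-(((k:ℝ) - n*q) /
          (Real.sqrt n * Real.sqrt (q*(1-q))))^2/2)) - 1|
      ≤ Real.exp (9/((n:ℝ)*q) + 6*C/Real.log n
          + 20*C^3*Real.sqrt ((Real.log n)^3/((n:ℝ)*q))) - 1 := by
  set N := (n:ℝ) with hN
  set L := Real.log N with hLdef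
  set t := (k:ℝ) - N*q with ht
  clear_value t
  clear_value L
  clear_value N
  have hq1 : (1:ℝ)/3 ≤ 1 - q := by linarith
  have hq1' : 0 < 1 - q := by linarith
  have hL20 : 20 ≤ L := by nlinarith
  have hLC : 20*C ≤ L := by nlinarith
  have hLpos : 0 < L := by linarith
  have hNnn : (0:ℝ) ≤ N := by rw [hN]; exact Nat.cast_nonneg n
  have hN1 : 1 < N := by
    by_contra h
    push_neg at h
    have : L ≤ 0 := by rw [hLdef]; exact Real.log_nonpos hNnn h
    linarith
  have hNpos : 0 < N := by linarith
  have hNq : 0 < N*q := by positivity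
  have hL3 : 8000 ≤ L^3 := by
    have h20 := pow_le_pow_left₀ (by norm_num : (0:ℝ) ≤ 20) hL20 3
    norm_num at h20
    linarith
  have hNq8000 : 8000 ≤ N*q := le_trans hL3 hnq
  have hσ2pos : 0 < q*(1-q) := by positivity
  set σ := Real.sqrt (q*(1-q)) with hσ
  clear_value σ
  have hσpos : 0 < σ := by rw [hσ]; positivity
  have hσ2 : σ^2 = q*(1-q) := by rw [hσ]; exact Real.sq_sqrt hσ2pos.le
  have hσle : σ ≤ Real.sqrt q := by rw [hσ]; exact Real.sqrt_le_sqrt (by nlinarith)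
  have hsqLpos : 0 < Real.sqrt L := Real.sqrt_pos.2 hLpos
  have hsqNqpos : 0 < Real.sqrt (N*q) := Real.sqrt_pos.2 hNq
  have hsqNq : Real.sqrt (N*q) ^ 2 = N*q := Real.sq_sqrt hNq.le
  have hsqL2 : Real.sqrt L ^ 2 = L := Real.sq_sqrt hLpos.le
  -- |t| ≤ C √L √(Nq)
  have habs_t : |t| ≤ C * (Real.sqrt L * Real.sqrt (N*q)) := by
    have h1 : Real.sqrt (N*L) * σ ≤ Real.sqrt (N*L) * Real.sqrt q :=
      mul_le_mul_of_nonneg_left hσle (Real.sqrt_nonneg _)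
    have h2 : Real.sqrt (N*L) * Real.sqrt q = Real.sqrt L * Real.sqrt (N*q) := by
      rw [← Real.sqrt_mul (by positivity), ← Real.sqrt_mul hLpos.le]
      ring_nf
    calc |t| ≤ C*Real.sqrt (N*L)*σ := hk
      _ ≤ C*(Real.sqrt L * Real.sqrt (N*q)) := by
          rw [mul_assoc]
          apply mul_le_mul_of_nonneg_left _ hC.le
          rw [← h2]; exact h1
  set a := t/(N*q) with ha
  clear_value a
  have habs_a : |a| ≤ C * Real.sqrt L / Real.sqrt (N*q) := by
    rw [ha, abs_div, abs_of_pos hNq, div_le_div_iff₀ hNq hsqNqpos]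
    calc |t| * Real.sqrt (N*q) ≤ (C * (Real.sqrt L * Real.sqrt (N*q))) * Real.sqrt (N*q) :=
          mul_le_mul_of_nonneg_right habs_t (Real.sqrt_nonneg _)
      _ = C * Real.sqrt L * (N*q) := by linear_combination (C * Real.sqrt L) * hsqNq
  have hsqNqL : L * Real.sqrt L ≤ Real.sqrt (N*q) := by
    have h1 : Real.sqrt (L^3) ≤ Real.sqrt (N*q) := Real.sqrt_le_sqrt hnq
    have h2 : Real.sqrt (L^3) = L * Real.sqrt L := by
      rw [show L^3 = L^2 * L by ring, Real.sqrt_mul (sq_nonneg L), Real.sqrt_sq hLpos.le]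
    linarith
  have habs_aCL : |a| ≤ C / L := by
    have h1 : C * Real.sqrt L / Real.sqrt (N*q) ≤ C * Real.sqrt L / (L * Real.sqrt L) :=
      div_le_div_of_nonneg_left (by positivity) (by positivity) hsqNqL
    have h2 : C * Real.sqrt L / (L * Real.sqrt L) = C / L := by
      field_simp
    linarith
  have habs_a20 : |a| ≤ 1/20 := by
    have : C / L ≤ 1/20 := by
      rw [div_le_div_iff₀ hLpos (by norm_num)]
      linarith
    linarith
  set b := t/(N*(1-q)) with hb
  clear_value b
  have hab : b = a * (q/(1-q)) := by
    rw [ha, hb]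
    field_simp
  have hq2 : q/(1-q) ≤ 2 := by rw [div_le_iff₀ hq1']; linarith
  have habs_b : |b| ≤ 2*|a| := by
    rw [hab, abs_mul, abs_of_pos (by positivity : (0:ℝ) < q/(1-q))]
    nlinarith [abs_nonneg a]
  have habs_b10 : |b| ≤ 1/10 := by linarith
  have hKa : (k:ℝ) = N*q*(1+a) := by
    have : N*q*(1+a) = N*q + t := by rw [ha]; field_simp
    rw [this, ht]; ring
  have hK2 : N*q*(19/20) ≤ (k:ℝ) := by
    rw [hKa]
    have ha' : (19/20 : ℝ) ≤ 1+a := by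
      have := (abs_le.1 habs_a20).1
      linarith
    exact mul_le_mul_of_nonneg_left ha' hNq.le
  have hK1 : (1:ℝ) ≤ (k:ℝ) := by linarith
  have hKpos : (0:ℝ) < (k:ℝ) := by linarith
  have hk1 : 1 ≤ k := by exact_mod_cast hK1
  have hMa : N - (k:ℝ) = N*(1-q)*(1-b) := by
    have : N*(1-q)*(1-b) = N*(1-q) - t := by rw [hb]; field_simp
    rw [this, ht]; ring
  have hNq_le_N : N*q ≤ N := by
    have := mul_le_mul_of_nonneg_left (by linarith : q ≤ 1) hNnn
    linarith [this]
  have hN8000 : (8000:ℝ) ≤ N := by linarith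
  have hM4 : N/4 ≤ N - (k:ℝ) := by
    rw [hMa]
    have hb' : (9/10:ℝ) ≤ 1-b := by
      have := (abs_le.1 habs_b10).2
      linarith
    have h1 : N*(1/3) ≤ N*(1-q) := mul_le_mul_of_nonneg_left hq1 hNnn
    have h2 : (N*(1/3))*(9/10) ≤ (N*(1-q))*(1-b) := by
      apply mul_le_mul h1 hb' (by norm_num) (by positivity)
    linarith
  have hMpos : (0:ℝ) < N - (k:ℝ) := by linarith
  have hklt : k < n := by
    have h2 : (k:ℝ) < N := by linarith
    rw [hN] at h2
    exact_mod_cast h2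
  have hkn : k ≤ n := hklt.le
  have hmcast : ((n-k : ℕ):ℝ) = N - (k:ℝ) := by
    rw [Nat.cast_sub hkn, hN]
  have hm1 : 1 ≤ n - k := by
    have : (1:ℝ) ≤ ((n-k:ℕ):ℝ) := by rw [hmcast]; linarith
    exact_mod_cast this
  have hn1 : 1 ≤ n := by
    have h2 : (1:ℝ) < ↑n := by rw [← hN]; exact hN1
    exact_mod_cast h2.le
  -- Stirling log bounds
  have hspi : (0:ℝ) < Real.sqrt π := Real.sqrt_pos.2 pi_pos
  have hrr : ∀ j:ℕ, 1 ≤ j → Real.log (Real.sqrt π) ≤ Real.log (stirlingSeq j) ∧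
      Real.log (stirlingSeq j) ≤ Real.log (Real.sqrt π) + 1/j := by
    intro j hj
    have h1 := sqrt_pi_le_stirlingSeq j hj
    have h2 := stirlingSeq_le j hj
    constructor
    · exact Real.log_le_log hspi h1
    · calc Real.log (stirlingSeq j) ≤ Real.log (Real.sqrt π * Real.exp (1/j)) :=
          Real.log_le_log (lt_of_lt_of_le hspi h1) h2
        _ = Real.log (Real.sqrt π) + 1/j := by
            rw [Real.log_mul hspi.ne' (Real.exp_ne_zero _), Real.log_exp]
  obtain ⟨hrn1, hrn2⟩ := hrr n hn1
  obtain ⟨hrk1, hrk2⟩ := hrr k hk1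
  obtain ⟨hrm1, hrm2⟩ := hrr (n-k) hm1
  rw [← hN] at hrn2
  rw [hmcast] at hrm2
  -- x
  set x := t / (Real.sqrt N * σ) with hx
  clear_value x
  have hsqrtNpos : 0 < Real.sqrt N := Real.sqrt_pos.2 hNpos
  have hx2 : x^2 = t^2/(N*(q*(1-q))) := by
    rw [hx, div_pow, mul_pow, Real.sq_sqrt hNpos.le, hσ2]
  -- binomProb positivity
  have hcpos : (0:ℝ) < (n.choose k : ℝ) := by exact_mod_cast Nat.choose_pos hkn
  have hBpos : 0 < binomProb n q k := by
    unfold binomProb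
    positivity
  have h2πpos : (0:ℝ) < Real.sqrt (2*π) := Real.sqrt_pos.2 (by positivity)
  -- rewrite the goal expression
  have hEeq : binomProb n q k * (Real.sqrt N * σ) /
      ((Real.sqrt (2*π))⁻¹ * Real.exp (-x^2/2))
      = binomProb n q k * (Real.sqrt N * σ) * (Real.sqrt (2*π) * Real.exp (x^2/2)) := by
    rw [show -x^2/2 = -(x^2/2) by ring, Real.exp_neg]
    rw [div_eq_mul_inv, mul_inv, inv_inv, inv_inv]
  rw [hEeq]
  set E := binomProb n q k * (Real.sqrt N * σ) * (Real.sqrt (2*π) * Real.exp (x^2/2)) with hE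
  have hEpos : 0 < E := by
    rw [hE]
    positivity
  -- log identities
  have hKne : ((k:ℝ)) ≠ 0 := ne_of_gt hKpos
  have h1a : 1 + a = (k:ℝ)/(N*q) := by
    rw [hKa]
    field_simp
  have h1b : 1 - b = (N - (k:ℝ))/(N*(1-q)) := by
    rw [hMa]
    field_simp
  have hlog1a : Real.log (1+a) = Real.log (k:ℝ) - (Real.log N + Real.log q) := by
    rw [h1a, Real.log_div hKne (by positivity), Real.log_mul hNpos.ne' hq0.ne']
  have hlog1b : Real.log (1-b) = Real.log (N - (k:ℝ)) - (Real.log N + Real.log (1-q)) := by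
    rw [h1b, Real.log_div hMpos.ne' (by positivity), Real.log_mul hNpos.ne' hq1'.ne']
  -- log binomProb
  have hfnpos : (0:ℝ) < (Nat.factorial n : ℝ) := by exact_mod_cast Nat.factorial_pos n
  have hfkpos : (0:ℝ) < (Nat.factorial k : ℝ) := by exact_mod_cast Nat.factorial_pos k
  have hfmpos : (0:ℝ) < (Nat.factorial (n-k) : ℝ) := by exact_mod_cast Nat.factorial_pos (n-k)
  have hBlog : Real.log (binomProb n q k) = Real.log (Nat.factorial n : ℝ)
      - Real.log (Nat.factorial k : ℝ) - Real.log (Nat.factorial (n-k) : ℝ)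
      + (k:ℝ)*Real.log q + (N-(k:ℝ))*Real.log (1-q) := by
    unfold binomProb
    rw [Real.log_mul (by positivity) (by positivity),
        Real.log_mul (by positivity) (by positivity),
        Real.log_pow, Real.log_pow,
        Nat.cast_choose ℝ hkn,
        Real.log_div hfnpos.ne' (by positivity),
        Real.log_mul hfkpos.ne' hfmpos.ne', hmcast]
    ring
  have hfn := log_factorial_eq n hn1
  have hfk := log_factorial_eq k hk1
  have hfm := log_factorial_eq (n-k) hm1
  rw [← hN] at hfn
  rw [hmcast] at hfm
  rw [Real.log_mul two_ne_zero hNpos.ne'] at hfn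
  rw [Real.log_mul two_ne_zero hKne] at hfk
  rw [Real.log_mul two_ne_zero hMpos.ne'] at hfm
  -- log E in terms of binomProb
  have hsNne : Real.sqrt N ≠ 0 := ne_of_gt hsqrtNpos
  have hlogσ : Real.log σ = (1/2)*(Real.log q + Real.log (1-q)) := by
    rw [hσ, Real.log_sqrt hσ2pos.le, Real.log_mul hq0.ne' hq1'.ne']
    ring
  have hlogE1 : Real.log E = Real.log (binomProb n q k) + (1/2)*Real.log N
      + (1/2)*Real.log q + (1/2)*Real.log (1-q) + (1/2)*Real.log 2 + (1/2)*Real.log π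
      + x^2/2 := by
    rw [hE, Real.log_mul (by positivity) (by positivity),
        Real.log_mul (by positivity) (by positivity),
        Real.log_mul h2πpos.ne' (Real.exp_ne_zero _),
        Real.log_mul hsNne hσpos.ne',
        Real.log_exp, Real.log_sqrt hNnn, Real.log_sqrt (by positivity : (0:ℝ) ≤ 2*π),
        Real.log_mul two_ne_zero pi_pos.ne', hlogσ]
    ring
  have hgoal : Real.log E = (Real.log (stirlingSeq n) - Real.log (stirlingSeq k)
        - Real.log (stirlingSeq (n-k)) + Real.log (Real.sqrt π))
      - (1/2)*(Real.log (1+a) + Real.log (1-b))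
      - ((k:ℝ)*Real.log (1+a) + (N-(k:ℝ))*Real.log (1-b) - x^2/2) := by
    rw [hlogE1, hBlog, hfn, hfk, hfm, hlog1a, hlog1b, Real.log_sqrt pi_pos.le]
    ring
  -- bound on Stirling correction
  have hΔbound : |Real.log (stirlingSeq n) - Real.log (stirlingSeq k)
      - Real.log (stirlingSeq (n-k)) + Real.log (Real.sqrt π)| ≤ 9/(N*q) := by
    have h1k : 1/(k:ℝ) ≤ 2/(N*q) := by
      rw [div_le_div_iff₀ hKpos hNq]
      linarith
    have h1m : 1/(N-(k:ℝ)) ≤ 4/N := by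
      rw [div_le_div_iff₀ hMpos hNpos]
      linarith
    have h1n : 1/N ≤ 1/(N*q) := by
      rw [div_le_div_iff₀ hNpos hNq]
      linarith [hNq_le_N]
    have h4N : 4/N ≤ 4/(N*q) := by
      rw [div_le_div_iff₀ hNpos hNq]
      linarith [hNq_le_N]
    have hpos9 : (0:ℝ) ≤ 1/(N*q) := by positivity
    rw [abs_le]
    constructor
    · have : 2/(N*q) + 4/(N*q) ≤ 9/(N*q) := by
        rw [← add_div, div_le_div_iff₀ hNq hNq]
        linarith [hNq]
      linarith [hrn1, hrk2, hrm2, h1k, h1m, h4N]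
    · have : 1/(N*q) ≤ 9/(N*q) := by
        rw [div_le_div_iff₀ hNq hNq]
        linarith [hNq]
      linarith [hrn2, hrk1, hrm1, h1n]
  -- bound on the half-log term
  have habs_loga : |Real.log (1+a)| ≤ 2*|a| := abs_log_one_add_le a (by linarith)
  have habs_logb : |Real.log (1-b)| ≤ 2*|b| := abs_log_one_sub_le b (by linarith)
  have hCLpos : 0 < C/L := by positivity
  have hHbound : |(1/2)*(Real.log (1+a) + Real.log (1-b))| ≤ 6*C/L := by
    have h1 : |Real.log (1+a) + Real.log (1-b)| ≤ 2*|a| + 2*|b| :=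
      le_trans (abs_add_le _ _) (by linarith)
    rw [abs_mul, show |(1/2:ℝ)| = 1/2 by norm_num, show 6*C/L = 6*(C/L) by ring]
    linarith [habs_aCL, habs_b, hCLpos, abs_nonneg a, abs_nonneg b, h1]
  -- the entropy term
  have hxab : x^2/2 = N*q*(a+a^2/2) + N*(1-q)*(-b+b^2/2) := by
    rw [hx2, ha, hb]
    field_simp
    ring
  have hSid : (k:ℝ)*Real.log (1+a) + (N-(k:ℝ))*Real.log (1-b) - x^2/2
      = N*q*((1+a)*Real.log (1+a) - a - a^2/2)
        + N*(1-q)*((1-b)*Real.log (1-b) + b - b^2/2) := by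
    rw [hMa, hKa]
    linear_combination (-1 : ℝ) * hxab
  have hS_bound : |(k:ℝ)*Real.log (1+a) + (N-(k:ℝ))*Real.log (1-b) - x^2/2|
      ≤ 20*C^3*Real.sqrt (L^3/(N*q)) := by
    rw [hSid]
    have hta := taylor_entropy a (by linarith)
    have htb := taylor_entropy_neg b (by linarith)
    have hNqa : (0:ℝ) ≤ N*q := hNq.le
    have hN1q : (0:ℝ) ≤ N*(1-q) := by positivity
    have step1 : |N*q*((1+a)*Real.log (1+a) - a - a^2/2)
          + N*(1-q)*((1-b)*Real.log (1-b) + b - b^2/2)|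
        ≤ N*q*(4*|a|^3) + N*(1-q)*(4*|b|^3) := by
      calc |N*q*((1+a)*Real.log (1+a) - a - a^2/2)
            + N*(1-q)*((1-b)*Real.log (1-b) + b - b^2/2)|
          ≤ abs (N*q*((1+a)*Real.log (1+a) - a - a^2/2))
            + abs (N*(1-q)*((1-b)*Real.log (1-b) + b - b^2/2)) := abs_add_le _ _
        _ = N*q*abs ((1+a)*Real.log (1+a) - a - a^2/2)
            + N*(1-q)*abs ((1-b)*Real.log (1-b) + b - b^2/2) := by
            rw [abs_mul (N*q), abs_mul (N*(1-q)), abs_of_nonneg hNqa, abs_of_nonneg hN1q]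
        _ ≤ N*q*(4*|a|^3) + N*(1-q)*(4*|b|^3) :=
            add_le_add (mul_le_mul_of_nonneg_left hta hNqa)
              (mul_le_mul_of_nonneg_left htb hN1q)
    have hb_cube : N*(1-q)*(4*|b|^3) ≤ 16*(N*q*|a|^3) := by
      rw [hab, abs_mul, abs_of_pos (show (0:ℝ) < q/(1-q) by positivity), mul_pow]
      have key : (1-q)*((q/(1-q))^3) ≤ 4*q := by
        rw [div_pow]
        rw [show (1-q)*(q^3/(1-q)^3) = q^3/(1-q)^2 by
          field_simp]
        rw [div_le_iff₀ (by positivity)]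
        have hfact : 4*q*(1-q)^2 - q^3 = q*((2-3*q)*(2-q)) := by ring
        have hnn : (0:ℝ) ≤ q*((2-3*q)*(2-q)) := mul_nonneg hq0.le (mul_nonneg
          (by linarith : (0:ℝ) ≤ 2-3*q) (by linarith : (0:ℝ) ≤ 2-q))
        linarith [hfact, hnn]
      calc N*(1-q)*(4*(|a|^3*(q/(1-q))^3)) = 4*N*|a|^3*((1-q)*(q/(1-q))^3) := by ring
        _ ≤ 4*N*|a|^3*(4*q) :=
            mul_le_mul_of_nonneg_left key (by positivity)
        _ = 16*(N*q*|a|^3) := by ring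
    have ha_cube : N*q*|a|^3 ≤ C^3*Real.sqrt (L^3/(N*q)) := by
      have h1 : |a|^3 ≤ (C*Real.sqrt L/Real.sqrt (N*q))^3 :=
        pow_le_pow_left₀ (abs_nonneg a) habs_a 3
      have hsq3 : Real.sqrt (N*q)^3 = (N*q)*Real.sqrt (N*q) := by
        rw [pow_succ, hsqNq]
      have h2 : N*q*(C*Real.sqrt L/Real.sqrt (N*q))^3
          = C^3*(Real.sqrt L^3/Real.sqrt (N*q)) := by
        rw [div_pow, mul_pow, hsq3]
        field_simp
      have h3 : Real.sqrt L^3 = Real.sqrt (L^3) := by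
        rw [← Real.sqrt_sq (by positivity : (0:ℝ) ≤ Real.sqrt L^3)]
        congr 1
        rw [show (Real.sqrt L^3)^2 = (Real.sqrt L^2)^3 by ring, hsqL2]
      have h4 : Real.sqrt (L^3/(N*q)) = Real.sqrt (L^3)/Real.sqrt (N*q) :=
        Real.sqrt_div (by positivity) _
      calc N*q*|a|^3 ≤ N*q*(C*Real.sqrt L/Real.sqrt (N*q))^3 :=
            mul_le_mul_of_nonneg_left h1 hNq.le
        _ = C^3*(Real.sqrt L^3/Real.sqrt (N*q)) := h2
        _ = C^3*Real.sqrt (L^3/(N*q)) := by rw [h3, ← h4]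
    calc |N*q*((1+a)*Real.log (1+a) - a - a^2/2)
          + N*(1-q)*((1-b)*Real.log (1-b) + b - b^2/2)|
        ≤ N*q*(4*|a|^3) + N*(1-q)*(4*|b|^3) := step1
      _ ≤ 4*(N*q*|a|^3) + 16*(N*q*|a|^3) := by linarith [hb_cube]
      _ = 20*(N*q*|a|^3) := by ring
      _ ≤ 20*(C^3*Real.sqrt (L^3/(N*q))) := by linarith [ha_cube]
      _ = 20*C^3*Real.sqrt (L^3/(N*q)) := by ring
  -- combine
  set D := 9/(N*q) + 6*C/L + 20*C^3*Real.sqrt (L^3/(N*q)) with hD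
  have hDnonneg : 0 ≤ D := by
    rw [hD]
    positivity
  have hlogE_bound : |Real.log E| ≤ D := by
    rw [hgoal, hD]
    set A := Real.log (stirlingSeq n) - Real.log (stirlingSeq k)
      - Real.log (stirlingSeq (n-k)) + Real.log (Real.sqrt π)
    set H := (1/2)*(Real.log (1+a) + Real.log (1-b))
    set S := (k:ℝ)*Real.log (1+a) + (N-(k:ℝ))*Real.log (1-b) - x^2/2
    have h1 : |A - H - S| ≤ |A - H| + |S| := abs_sub _ _
    have h2 : |A - H| ≤ |A| + |H| := abs_sub _ _
    linarith [hΔbound, hHbound, hS_bound]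
  have hElog : E = Real.exp (Real.log E) := (Real.exp_log hEpos).symm
  have hEub : E ≤ Real.exp D := by
    nth_rewrite 1 [hElog]
    exact Real.exp_le_exp.2 (le_trans (le_abs_self _) hlogE_bound)
  have hElb : Real.exp (-D) ≤ E := by
    nth_rewrite 1 [hElog]
    apply Real.exp_le_exp.2
    have := neg_abs_le (Real.log E)
    linarith [hlogE_bound]
  rw [abs_le]
  have h3 : (0:ℝ) < Real.exp D := Real.exp_pos D
  constructor
  · have h4 : 2 - Real.exp D ≤ (Real.exp D)⁻¹ := by
      rw [← one_div, le_div_iff₀ h3]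
      linarith [sq_nonneg (Real.exp D - 1)]
    have h5 : Real.exp (-D) = (Real.exp D)⁻¹ := Real.exp_neg D
    linarith [hElb]
  · linarith [hEub]


theorem local_central_limit_theorem
    (C : ℝ) (hC : 0 < C) (q : ℕ → ℝ)
    (hq : ∀ n, 0 ≤ q n ∧ q n ≤ 2 / 3)
    (hq' : Tendsto (fun n : ℕ => (n : ℝ) * q n / (Real.log n) ^ 3) atTop atTop) :
    ∃ ε : ℕ → ℝ, Tendsto ε atTop (nhds 0) ∧
      ∀ n k : ℕ,
        |(k : ℝ) - n * q n| ≤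
            C * Real.sqrt (n * Real.log n) * Real.sqrt (q n * (1 - q n)) →
        |binomProb n (q n) k * (Real.sqrt n * Real.sqrt (q n * (1 - q n))) /
            ((Real.sqrt (2 * π))⁻¹ *
              Real.exp (-(((k : ℝ) - n * q n) /
                (Real.sqrt n * Real.sqrt (q n * (1 - q n)))) ^ 2 / 2)) - 1| ≤ ε n := by
  classical
  refine ⟨fun n => if 20*(1+C) ≤ Real.log n ∧ (Real.log n)^3 ≤ (n:ℝ)*q n
        ∧ 200*(1+C^2)*Real.log n ≤ (n:ℝ)
      then Real.exp (9/((n:ℝ)*q n) + 6*C/Real.log n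
          + 20*C^3*Real.sqrt ((Real.log n)^3/((n:ℝ)*q n))) - 1
      else Real.sqrt (2*π) * Real.sqrt n * Real.exp (C^2*Real.log n/2) + 2, ?_, ?_⟩
  · -- tendsto
    have hlogTend : Tendsto (fun n : ℕ => Real.log n) atTop atTop :=
      Real.tendsto_log_atTop.comp tendsto_natCast_atTop_atTop
    have hL3tend : Tendsto (fun n:ℕ => (Real.log n)^3) atTop atTop :=
      (tendsto_pow_atTop (by norm_num : 3 ≠ 0)).comp hlogTend
    -- eventually the condition holds
    have e1 : ∀ᶠ n : ℕ in atTop, 20*(1+C) ≤ Real.log n :=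
      hlogTend.eventually_ge_atTop _
    have e2 : ∀ᶠ n : ℕ in atTop, (Real.log n)^3 ≤ (n:ℝ)*q n := by
      filter_upwards [hq'.eventually_ge_atTop 1, hlogTend.eventually_ge_atTop 1] with n h1 h2
      have hpos : (0:ℝ) < (Real.log n)^3 := by positivity
      rw [le_div_iff₀ hpos] at h1
      linarith
    have e3 : ∀ᶠ n : ℕ in atTop, 200*(1+C^2)*Real.log n ≤ (n:ℝ) := by
      have hc : (0:ℝ) < 1/(200*(1+C^2)) := by positivity
      have h := Real.isLittleO_log_id_atTop.bound hc
      filter_upwards [tendsto_natCast_atTop_atTop.eventually h,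
        hlogTend.eventually_ge_atTop 0] with n h1 h2
      simp only [Real.norm_eq_abs, id] at h1
      rw [abs_of_nonneg h2, abs_of_nonneg (Nat.cast_nonneg n : (0:ℝ) ≤ n)] at h1
      have h200 : (0:ℝ) < 200*(1+C^2) := by positivity
      rw [div_mul_eq_mul_div, le_div_iff₀ h200] at h1
      linarith
    have hevP : ∀ᶠ n : ℕ in atTop, (20*(1+C) ≤ Real.log n ∧ (Real.log n)^3 ≤ (n:ℝ)*q n
        ∧ 200*(1+C^2)*Real.log n ≤ (n:ℝ)) := by
      filter_upwards [e1, e2, e3] with n h1 h2 h3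
      exact ⟨h1, h2, h3⟩
    -- D tends to zero
    have hT1 : Tendsto (fun n:ℕ => (n:ℝ)*q n) atTop atTop := by
      have h := hq'.atTop_mul_atTop₀ hL3tend
      apply h.congr'
      filter_upwards [hlogTend.eventually_ge_atTop 1] with n hn
      have hpos : (0:ℝ) < (Real.log n)^3 := by positivity
      field_simp
    have hT9 : Tendsto (fun n:ℕ => 9/((n:ℝ)*q n)) atTop (𝓝 0) :=
      tendsto_const_nhds.div_atTop hT1
    have hT6 : Tendsto (fun n:ℕ => 6*C/Real.log n) atTop (𝓝 0) :=
      tendsto_const_nhds.div_atTop hlogTend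
    have hT3 : Tendsto (fun n:ℕ => 20*C^3*Real.sqrt ((Real.log n)^3/((n:ℝ)*q n)))
        atTop (𝓝 0) := by
      have h0 : Tendsto (fun n:ℕ => (Real.log n)^3/((n:ℝ)*q n)) atTop (𝓝 0) := by
        have h := hq'.inv_tendsto_atTop
        refine h.congr (fun n => ?_)
        simp [Pi.inv_apply, inv_div]
      have h1 : Tendsto (fun n:ℕ => Real.sqrt ((Real.log n)^3/((n:ℝ)*q n))) atTop (𝓝 0) := by
        have := (Real.continuous_sqrt.tendsto 0).comp h0
        simpa [Function.comp_def] using this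
      have := h1.const_mul (20*C^3)
      simpa using this
    have hDtend : Tendsto (fun n:ℕ => 9/((n:ℝ)*q n) + 6*C/Real.log n
        + 20*C^3*Real.sqrt ((Real.log n)^3/((n:ℝ)*q n))) atTop (𝓝 0) := by
      have := (hT9.add hT6).add hT3
      simpa using this
    have hdelta : Tendsto (fun n:ℕ => Real.exp (9/((n:ℝ)*q n) + 6*C/Real.log n
        + 20*C^3*Real.sqrt ((Real.log n)^3/((n:ℝ)*q n))) - 1) atTop (𝓝 0) := by
      have h2 := (Real.continuous_exp.tendsto 0).comp hDtend
      rw [Real.exp_zero] at h2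
      have h3 := h2.sub_const 1
      simpa using h3
    apply hdelta.congr'
    filter_upwards [hevP] with n hn
    rw [if_pos hn]
  · intro n k hk
    by_cases h : 20*(1+C) ≤ Real.log n ∧ (Real.log n)^3 ≤ (n:ℝ)*q n
        ∧ 200*(1+C^2)*Real.log n ≤ (n:ℝ)
    · beta_reduce
      rw [if_pos h]
      have hq0 : 0 < q n := by
        by_contra hq0
        push_neg at hq0
        have h1 : (0:ℝ) < (Real.log n)^3 := by
          have : (0:ℝ) < Real.log n := by linarith [h.1]
          positivity
        have h2 : (n:ℝ)*q n ≤ 0 :=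
          mul_nonpos_of_nonneg_of_nonpos (Nat.cast_nonneg n) hq0
        linarith [h.2.1]
      exact main_est C hC n k (q n) hq0 (hq n).2 h.1 h.2.1 h.2.2 hk
    · beta_reduce
      rw [if_neg h]
      exact fallback_est C hC n k (q n) (hq n).1 (hq n).2 hk
end

section
/- Let X ~ Binomial(m, p) with 0 < p < 1, and let k, ℓ be nonnegative integers with k + ℓ ≤ m and k < m. Then Pr(X = k + ℓ) ≤ Pr(X = k) · (mp/(k+1))^ℓ · ((m−k)/(m − mp))^ℓ. -/
open Real Filter

lemma choose_ratio_bound (m k : ℕ) (hk : k < m) :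
    ∀ ℓ : ℕ, k + ℓ ≤ m →
    (m.choose (k + ℓ) : ℝ) ≤ (m.choose k : ℝ) * (((m : ℝ) - (k : ℝ)) / ((k : ℝ) + 1)) ^ ℓ := by
  intro ℓ
  induction ℓ with
  | zero => simp
  | succ n ih =>
    intro h
    have h' : k + n ≤ m := by omega
    have key : (m.choose (k + n + 1) : ℝ) * ((k : ℝ) + n + 1) =
        (m.choose (k + n) : ℝ) * ((m : ℝ) - ((k : ℝ) + n)) := by
      have := Nat.choose_succ_right_eq m (k + n)
      have h2 : ((m.choose (k + n + 1) * (k + n + 1) : ℕ) : ℝ)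
          = ((m.choose (k + n) * (m - (k + n)) : ℕ) : ℝ) := by exact_mod_cast congrArg (Nat.cast : ℕ → ℝ) this
      rw [Nat.cast_mul, Nat.cast_mul, Nat.cast_sub h'] at h2
      push_cast at h2 ⊢
      linarith
    have hpos : (0 : ℝ) < (k : ℝ) + n + 1 := by positivity
    have heq : (m.choose (k + n + 1) : ℝ) =
        (m.choose (k + n) : ℝ) * (((m : ℝ) - ((k : ℝ) + n)) / ((k : ℝ) + n + 1)) := by
      field_simp
      linarith [key]
    have hratio : ((m : ℝ) - ((k : ℝ) + n)) / ((k : ℝ) + n + 1) ≤ ((m : ℝ) - (k : ℝ)) / ((k : ℝ) + 1) := by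
      have hmk : ((k : ℝ) + n) ≤ (m : ℝ) := by exact_mod_cast h'
      have hmk2 : ((k : ℝ)) ≤ (m : ℝ) := by exact_mod_cast hk.le
      apply div_le_div₀ (by linarith) (by linarith) (by positivity) (by linarith)
    calc (m.choose (k + n + 1) : ℝ)
        = (m.choose (k + n) : ℝ) * (((m : ℝ) - ((k : ℝ) + n)) / ((k : ℝ) + n + 1)) := heq
      _ ≤ ((m.choose k : ℝ) * (((m : ℝ) - (k : ℝ)) / ((k : ℝ) + 1)) ^ n) * (((m : ℝ) - (k : ℝ)) / ((k : ℝ) + 1)) := by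
          apply mul_le_mul (ih h') hratio
          · apply div_nonneg _ (by positivity)
            have : (k : ℝ) + n ≤ m := by exact_mod_cast h'
            linarith
          · have hmk2 : ((k : ℝ)) ≤ (m : ℝ) := by exact_mod_cast hk.le
            exact mul_nonneg (by positivity)
              (pow_nonneg (div_nonneg (by linarith) (by positivity)) n)
      _ = (m.choose k : ℝ) * (((m : ℝ) - (k : ℝ)) / ((k : ℝ) + 1)) ^ (n + 1) := by ring

theorem binomial_ratio_bound
    (m : ℕ) (p : ℝ) (hp0 : 0 < p) (hp1 : p < 1) (k ℓ : ℕ)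
    (hkl : k + ℓ ≤ m) (hk : k < m) :
    binomProb m p (k + ℓ) ≤
      binomProb m p k * ((m : ℝ) * p / ((k : ℝ) + 1)) ^ ℓ *
        (((m : ℝ) - (k : ℝ)) / ((m : ℝ) - (m : ℝ) * p)) ^ ℓ := by
  have hm : (0 : ℝ) < m := by exact_mod_cast Nat.pos_of_ne_zero (by omega)
  have h1p : (0 : ℝ) < 1 - p := by linarith
  have hmk2 : ((k : ℝ)) ≤ (m : ℝ) := by exact_mod_cast hk.le
  have hchoose := choose_ratio_bound m k hk ℓ hkl
  have hsub : m - k = (m - (k + ℓ)) + ℓ := by omega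
  unfold binomProb
  have hRHS : (m.choose k : ℝ) * p ^ k * (1 - p) ^ (m - k) * ((m : ℝ) * p / ((k : ℝ) + 1)) ^ ℓ *
        (((m : ℝ) - (k : ℝ)) / ((m : ℝ) - (m : ℝ) * p)) ^ ℓ
      = ((m.choose k : ℝ) * (((m : ℝ) - (k : ℝ)) / ((k : ℝ) + 1)) ^ ℓ) * p ^ (k + ℓ) *
        (1 - p) ^ (m - (k + ℓ)) := by
    rw [hsub, pow_add, pow_add]
    have hkey : (1 - p) ^ ℓ * ((m : ℝ) * p / ((k : ℝ) + 1)) ^ ℓ *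
        (((m : ℝ) - (k : ℝ)) / ((m : ℝ) - (m : ℝ) * p)) ^ ℓ
        = (((m : ℝ) - (k : ℝ)) / ((k : ℝ) + 1)) ^ ℓ * p ^ ℓ := by
      rw [← mul_pow, ← mul_pow, ← mul_pow]
      congr 1
      have hne : (m : ℝ) - (m : ℝ) * p ≠ 0 := by nlinarith
      have hk1 : ((k : ℝ) + 1) ≠ 0 := by positivity
      field_simp
    calc (m.choose k : ℝ) * p ^ k * ((1 - p) ^ (m - (k + ℓ)) * (1 - p) ^ ℓ) *
          ((m : ℝ) * p / ((k : ℝ) + 1)) ^ ℓ *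
          (((m : ℝ) - (k : ℝ)) / ((m : ℝ) - (m : ℝ) * p)) ^ ℓ
        = (m.choose k : ℝ) * p ^ k * (1 - p) ^ (m - (k + ℓ)) *
            ((1 - p) ^ ℓ * ((m : ℝ) * p / ((k : ℝ) + 1)) ^ ℓ *
              (((m : ℝ) - (k : ℝ)) / ((m : ℝ) - (m : ℝ) * p)) ^ ℓ) := by ring
      _ = (m.choose k : ℝ) * p ^ k * (1 - p) ^ (m - (k + ℓ)) *
            ((((m : ℝ) - (k : ℝ)) / ((k : ℝ) + 1)) ^ ℓ * p ^ ℓ) := by rw [hkey]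
      _ = ((m.choose k : ℝ) * (((m : ℝ) - (k : ℝ)) / ((k : ℝ) + 1)) ^ ℓ) * (p ^ k * p ^ ℓ) *
            (1 - p) ^ (m - (k + ℓ)) := by ring
  rw [hRHS]
  have hnn : (0 : ℝ) ≤ p ^ (k + ℓ) * (1 - p) ^ (m - (k + ℓ)) := by positivity
  calc (m.choose (k + ℓ) : ℝ) * p ^ (k + ℓ) * (1 - p) ^ (m - (k + ℓ))
      = (m.choose (k + ℓ) : ℝ) * (p ^ (k + ℓ) * (1 - p) ^ (m - (k + ℓ))) := by ring
    _ ≤ ((m.choose k : ℝ) * (((m : ℝ) - (k : ℝ)) / ((k : ℝ) + 1)) ^ ℓ) *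
          (p ^ (k + ℓ) * (1 - p) ^ (m - (k + ℓ))) := by
        apply mul_le_mul_of_nonneg_right hchoose hnn
    _ = ((m.choose k : ℝ) * (((m : ℝ) - (k : ℝ)) / ((k : ℝ) + 1)) ^ ℓ) * p ^ (k + ℓ) *
          (1 - p) ^ (m - (k + ℓ)) := by ring
end

section
/- Let p_m be a sequence with m p_m ≤ 128 log m for all m, and let k_m be a sequence of nonnegative integers with k_m/m → 0. Let X_m ~ Binomial(m, p_m). Then for all sufficiently large m and every integer ℓ ≥ 1 with k_m + ℓ ≤ m, Pr(X_m = k_m + ℓ) ≤ Pr(X_m = k_m) · (m p_m / ℓ)^ℓ · e^{2ℓ}. -/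
open Real Filter

lemma choose_mul_factorial_le (m k : ℕ) : ∀ ℓ : ℕ,
    m.choose (k + ℓ) * ℓ.factorial ≤ m.choose k * m ^ ℓ := by
  intro ℓ
  induction ℓ with
  | zero => simp
  | succ ℓ ih =>
    have h1 : m.choose (k + ℓ + 1) * (ℓ + 1) ≤ m.choose (k + ℓ) * m := by
      calc m.choose (k + ℓ + 1) * (ℓ + 1) ≤ m.choose (k + ℓ + 1) * (k + ℓ + 1) :=
            Nat.mul_le_mul_left _ (by omega)
        _ = m.choose (k + ℓ) * (m - (k + ℓ)) := Nat.choose_succ_right_eq m (k + ℓ)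
        _ ≤ m.choose (k + ℓ) * m := Nat.mul_le_mul_left _ (Nat.sub_le _ _)
    calc m.choose (k + (ℓ + 1)) * (ℓ + 1).factorial
        = (m.choose (k + ℓ + 1) * (ℓ + 1)) * ℓ.factorial := by
          rw [Nat.factorial_succ]; ring_nf
      _ ≤ (m.choose (k + ℓ) * m) * ℓ.factorial := Nat.mul_le_mul_right _ h1
      _ = (m.choose (k + ℓ) * ℓ.factorial) * m := by ring
      _ ≤ (m.choose k * m ^ ℓ) * m := Nat.mul_le_mul_right _ ih
      _ = m.choose k * m ^ (ℓ + 1) := by ring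

lemma pow_self_le_factorial_mul_exp (ℓ : ℕ) :
    (ℓ : ℝ) ^ ℓ ≤ (ℓ.factorial : ℝ) * Real.exp ℓ := by
  have h := Real.pow_div_factorial_le_exp (x := (ℓ : ℝ)) (by positivity) ℓ
  have hf : (0:ℝ) < ℓ.factorial := by exact_mod_cast ℓ.factorial_pos
  rw [div_le_iff₀ hf] at h
  linarith [h]

theorem binomial_ratio_bound_sparse
    (p : ℕ → ℝ) (hp : ∀ m, 0 ≤ p m ∧ p m ≤ 1)
    (hp' : ∀ m : ℕ, (m : ℝ) * p m ≤ 128 * Real.log m)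
    (k : ℕ → ℕ) (hk : Tendsto (fun m : ℕ => (k m : ℝ) / (m : ℝ)) atTop (nhds 0)) :
    ∀ᶠ m : ℕ in atTop, ∀ ℓ : ℕ, 1 ≤ ℓ → k m + ℓ ≤ m →
      binomProb m (p m) (k m + ℓ) ≤
        binomProb m (p m) (k m) * ((m : ℝ) * p m / (ℓ : ℝ)) ^ ℓ *
          Real.exp (2 * ℓ) := by
  -- eventually p m ≤ 1 - e⁻¹
  have hlog : Tendsto (fun m : ℕ => 128 * Real.log m / m) atTop (nhds 0) := by
    have h1 : Tendsto (fun x : ℝ => Real.log x / x) atTop (nhds 0) :=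
      Real.isLittleO_log_id_atTop.tendsto_div_nhds_zero
    have h2 := (h1.comp tendsto_natCast_atTop_atTop).const_mul (128 : ℝ)
    simpa [Function.comp, mul_div_assoc, mul_zero] using h2
  have hpos : (0:ℝ) < 1 - Real.exp (-1) := by
    have : Real.exp (-1) < 1 := Real.exp_lt_one_iff.mpr (by norm_num)
    linarith
  have hev : ∀ᶠ m : ℕ in atTop, p m ≤ 1 - Real.exp (-1) := by
    have h3 : ∀ᶠ m : ℕ in atTop, 128 * Real.log m / m ≤ 1 - Real.exp (-1) := by
      filter_upwards [hlog.eventually (ge_mem_nhds hpos)] with m hm using hm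
    filter_upwards [h3, eventually_ge_atTop 1] with m hm hm1
    have hmpos : (0:ℝ) < m := by exact_mod_cast hm1
    have := hp' m
    calc p m = (m : ℝ) * p m / m := by field_simp
      _ ≤ 128 * Real.log m / m := by gcongr
      _ ≤ _ := hm
  filter_upwards [hev] with m hpm ℓ hℓ hkl
  obtain ⟨hp0, hp1⟩ := hp m
  set P := p m with hPdef
  set K := k m with hKdef
  by_cases hP : P = 0
  · have h1 : K + ℓ ≠ 0 := by omega
    have h2 : ℓ ≠ 0 := by omega
    simp [binomProb, hP, zero_pow h1, zero_pow h2]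
  · have hPpos : 0 < P := lt_of_le_of_ne hp0 (Ne.symm hP)
    have hQ : Real.exp (-1) ≤ 1 - P := by linarith
    have hQpos : 0 < 1 - P := lt_of_lt_of_le (Real.exp_pos _) hQ
    have hℓpos : (0:ℝ) < ℓ := by exact_mod_cast hℓ
    -- key inequality in ℝ
    have key : (m.choose (K + ℓ) : ℝ) * (ℓ:ℝ) ^ ℓ ≤
        (m.choose K : ℝ) * (m:ℝ) ^ ℓ * (1 - P) ^ ℓ * Real.exp (2 * ℓ) := by
      have hc : (m.choose (K + ℓ) : ℝ) * (ℓ.factorial : ℝ) ≤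
          (m.choose K : ℝ) * (m:ℝ) ^ ℓ := by
        exact_mod_cast choose_mul_factorial_le m K ℓ
      have hfac := pow_self_le_factorial_mul_exp ℓ
      have hQe : Real.exp (ℓ:ℝ) ≤ (1 - P) ^ ℓ * Real.exp (2 * ℓ) := by
        have h1 : (1:ℝ) ≤ (1 - P) * Real.exp 1 := by
          have := mul_le_mul_of_nonneg_right hQ (Real.exp_pos 1).le
          rwa [← Real.exp_add, neg_add_cancel, Real.exp_zero] at this
        have h2 : (1:ℝ) ≤ ((1 - P) * Real.exp 1) ^ ℓ := one_le_pow₀ h1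
        have h3 : ((1 - P) * Real.exp 1) ^ ℓ = (1 - P) ^ ℓ * Real.exp ℓ := by
          rw [mul_pow, ← Real.exp_nat_mul, mul_one]
        have h4 : Real.exp (2 * ℓ) = Real.exp ℓ * Real.exp ℓ := by
          rw [← Real.exp_add]; ring_nf
        nlinarith [Real.exp_pos (ℓ:ℝ), pow_pos hQpos ℓ, Real.exp_pos ((ℓ:ℝ))]
      calc (m.choose (K + ℓ) : ℝ) * (ℓ:ℝ) ^ ℓ
          ≤ (m.choose (K + ℓ) : ℝ) * ((ℓ.factorial : ℝ) * Real.exp ℓ) :=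
            mul_le_mul_of_nonneg_left hfac (Nat.cast_nonneg _)
        _ = ((m.choose (K + ℓ) : ℝ) * (ℓ.factorial : ℝ)) * Real.exp ℓ := by ring
        _ ≤ ((m.choose K : ℝ) * (m:ℝ) ^ ℓ) * Real.exp ℓ :=
            mul_le_mul_of_nonneg_right hc (Real.exp_pos _).le
        _ ≤ ((m.choose K : ℝ) * (m:ℝ) ^ ℓ) * ((1 - P) ^ ℓ * Real.exp (2 * ℓ)) := by
            apply mul_le_mul_of_nonneg_left hQe; positivity
        _ = _ := by ring
    -- now expand binomProb
    unfold binomProb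
    have hsub : m - K = (m - (K + ℓ)) + ℓ := by omega
    rw [hsub, pow_add]
    have hdiv : ((m:ℝ) * P / ℓ) ^ ℓ = (m:ℝ) ^ ℓ * P ^ ℓ / (ℓ:ℝ) ^ ℓ := by
      rw [div_pow, mul_pow]
    rw [hdiv, pow_add]
    have hℓne : ((ℓ:ℝ)) ^ ℓ ≠ 0 := by positivity
    apply le_of_mul_le_mul_right _ (pow_pos hℓpos ℓ)
    have h5 : (m.choose (K + ℓ) : ℝ) * (ℓ:ℝ) ^ ℓ * (P ^ K * P ^ ℓ * (1 - P) ^ (m - (K + ℓ))) ≤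
        ((m.choose K : ℝ) * (m:ℝ) ^ ℓ * (1 - P) ^ ℓ * Real.exp (2 * ℓ)) *
          (P ^ K * P ^ ℓ * (1 - P) ^ (m - (K + ℓ))) :=
      mul_le_mul_of_nonneg_right key (by positivity)
    calc (m.choose (K + ℓ) : ℝ) * (P ^ K * P ^ ℓ) * (1 - P) ^ (m - (K + ℓ)) * (ℓ:ℝ) ^ ℓ
        = (m.choose (K + ℓ) : ℝ) * (ℓ:ℝ) ^ ℓ * (P ^ K * P ^ ℓ * (1 - P) ^ (m - (K + ℓ))) := by
          ring
      _ ≤ ((m.choose K : ℝ) * (m:ℝ) ^ ℓ * (1 - P) ^ ℓ * Real.exp (2 * ℓ)) *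
          (P ^ K * P ^ ℓ * (1 - P) ^ (m - (K + ℓ))) := h5
      _ = (m.choose K : ℝ) * P ^ K * ((1 - P) ^ (m - (K + ℓ)) * (1 - P) ^ ℓ) *
          ((m:ℝ) ^ ℓ * P ^ ℓ / (ℓ:ℝ) ^ ℓ) * Real.exp (2 * ℓ) * (ℓ:ℝ) ^ ℓ := by
          field_simp
end

section
/- Let p_n = (log n)/n and let q_n be any sequence with 0 ≤ q_n ≤ p_n. Then there is a constant c > 0 such that P(n, p_n, q_n) ≥ c/n for all sufficiently large n; in particular, n · P(n, p_n, q_n) does not tend to 0. -/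
open Real Filter

lemma binomProb_nonneg_s19 {m : ℕ} {p : ℝ} (h0 : 0 ≤ p) (h1 : p ≤ 1) (k : ℕ) :
    0 ≤ binomProb m p k := by
  unfold binomProb
  have : (0:ℝ) ≤ 1 - p := by linarith
  positivity

lemma sum_binomProb (n : ℕ) (q : ℝ) :
    ∑ k ∈ Finset.range (n+1), binomProb n q k = 1 := by
  have h := add_pow q (1 - q) n
  simp only [add_sub_cancel, one_pow] at h
  calc ∑ k ∈ Finset.range (n+1), binomProb n q k
      = ∑ k ∈ Finset.range (n+1), q ^ k * (1-q) ^ (n-k) * (n.choose k : ℝ) := by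
        apply Finset.sum_congr rfl; intro k _; unfold binomProb; ring
    _ = 1 := h.symm

lemma prGE_ge (n : ℕ) {p q : ℝ} (hp0 : 0 ≤ p) (hp1 : p ≤ 1) (hq0 : 0 ≤ q) (hq1 : q ≤ 1) :
    (1 - p) ^ n ≤ prGE n p n q := by
  unfold prGE prGEshift
  have key : (∑ k ∈ Finset.range (n+1),
      if ((0:ℕ) : ℝ) - 0 ≤ (k : ℝ) then binomProb n p 0 * binomProb n q k else 0)
      = (1 - p) ^ n := by
    have : ∀ k ∈ Finset.range (n+1),
        (if ((0:ℕ) : ℝ) - 0 ≤ (k : ℝ) then binomProb n p 0 * binomProb n q k else 0)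
        = binomProb n p 0 * binomProb n q k := by
      intro k _
      rw [if_pos]
      simp [Nat.cast_nonneg]
    rw [Finset.sum_congr rfl this, ← Finset.mul_sum, sum_binomProb]
    unfold binomProb
    simp
  calc (1 - p) ^ n
      = ∑ k ∈ Finset.range (n+1),
          if ((0:ℕ) : ℝ) - 0 ≤ (k : ℝ) then binomProb n p 0 * binomProb n q k else 0 := key.symm
    _ ≤ _ := by
        refine Finset.single_le_sum (f := fun j => ∑ k ∈ Finset.range (n+1),
          if ((j:ℕ) : ℝ) - 0 ≤ (k : ℝ) then binomProb n p j * binomProb n q k else 0)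
          (fun j _ => Finset.sum_nonneg fun k _ => ?_) (by simp)
        split
        · exact mul_nonneg (binomProb_nonneg_s19 hp0 hp1 j) (binomProb_nonneg_s19 hq0 hq1 k)
        · exact le_rfl

lemma exp_le_one_sub {p : ℝ} (hp0 : 0 ≤ p) (hp1 : p < 1) :
    Real.exp (-(p / (1 - p))) ≤ 1 - p := by
  have h1 : 0 < 1 - p := by linarith
  have h2 : 1 / (1 - p) ≤ Real.exp (p / (1 - p)) := by
    have := Real.add_one_le_exp (p / (1 - p))
    have : 1 + p / (1 - p) = 1 / (1 - p) := by field_simp; ring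
    linarith [Real.add_one_le_exp (p / (1 - p))]
  rw [Real.exp_neg]
  rw [inv_le_comm₀ (Real.exp_pos _) h1] at *
  · rwa [one_div] at h2

lemma exp_le_pow {p : ℝ} (hp0 : 0 ≤ p) (hp1 : p < 1) (n : ℕ) :
    Real.exp (-((n : ℝ) * p / (1 - p))) ≤ (1 - p) ^ n := by
  rw [show -((n:ℝ) * p / (1 - p)) = (n : ℝ) * (-(p / (1 - p))) by ring,
    Real.exp_nat_mul]
  exact pow_le_pow_left₀ (Real.exp_pos _).le (exp_le_one_sub hp0 hp1) n

theorem log_over_n_not_strongly_consistent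
    (q : ℕ → ℝ) (hq : ∀ n : ℕ, 0 ≤ q n ∧ q n ≤ Real.log n / n) :
    (∃ c : ℝ, 0 < c ∧ ∀ᶠ n : ℕ in atTop,
        c / n ≤ Pn n (Real.log n / n) (q n)) ∧
      ¬ Tendsto (fun n : ℕ => (n : ℝ) * Pn n (Real.log n / n) (q n))
          atTop (nhds 0) := by

  have hc : (0:ℝ) < Real.exp (-1) := Real.exp_pos _
  -- eventual smallness facts
  have t2 : Tendsto (fun n : ℕ => (Real.log n) ^ 2 / n) atTop (nhds 0) := by
    have := (Real.tendsto_pow_log_div_mul_add_atTop 1 0 2 one_ne_zero).comp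
      tendsto_natCast_atTop_atTop
    simpa [Function.comp_def] using this
  have t1 : Tendsto (fun n : ℕ => Real.log n / n) atTop (nhds 0) := by
    have := (Real.tendsto_pow_log_div_mul_add_atTop 1 0 1 one_ne_zero).comp
      tendsto_natCast_atTop_atTop
    simpa [Function.comp_def] using this
  have E2 : ∀ᶠ n : ℕ in atTop, (Real.log n) ^ 2 / n ≤ 1/2 :=
    t2.eventually (eventually_le_nhds (by norm_num))
  have E1 : ∀ᶠ n : ℕ in atTop, Real.log n / n ≤ 1/2 :=
    t1.eventually (eventually_le_nhds (by norm_num))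
  have main : ∀ᶠ n : ℕ in atTop,
      Real.exp (-1) / n ≤ Pn n (Real.log n / n) (q n) := by
    filter_upwards [E1, E2, eventually_ge_atTop 2] with n h1 h2 hn2
    have hn0 : (0:ℝ) < n := by positivity
    have hlog0 : 0 ≤ Real.log n := Real.log_natCast_nonneg n
    set p : ℝ := Real.log n / n with hp
    have hp0 : 0 ≤ p := div_nonneg hlog0 hn0.le
    have hp1 : p < 1 := by
      have : Real.log n ≤ (n:ℝ) - 1 := Real.log_le_sub_one_of_pos hn0
      rw [hp, div_lt_one hn0]; linarith
    have hq0 := (hq n).1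
    have hqp := (hq n).2
    have hq1 : q n ≤ 1 := hqp.trans hp1.le
    have hmax : max p (q n) = p := max_eq_left hqp
    have hmin : min p (q n) = q n := min_eq_right hqp
    have hPn : Pn n p (q n) = prGE n p n (q n) := by
      unfold Pn Pmn; rw [hmax, hmin]
    have hge : (1 - p) ^ n ≤ Pn n p (q n) := by
      rw [hPn]; exact prGE_ge n hp0 hp1.le hq0 hq1
    have hexp : Real.exp (-((n:ℝ) * p / (1 - p))) ≤ (1 - p) ^ n :=
      exp_le_pow hp0 hp1 n
    have hnp : (n:ℝ) * p = Real.log n := by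
      rw [hp]; field_simp
    have hplog : p * Real.log n ≤ 1/2 := by
      have : p * Real.log n = (Real.log n)^2 / n := by rw [hp]; ring
      rw [this]; exact h2
    have hkey : Real.log n / (1 - p) ≤ Real.log n + 1 := by
      rw [div_le_iff₀ (by linarith)]
      nlinarith
    have hexp2 : Real.exp (-1) / n ≤ Real.exp (-((n:ℝ) * p / (1 - p))) := by
      have heq : Real.exp (-1 - Real.log n) = Real.exp (-1) / n := by
        rw [Real.exp_sub, Real.exp_log hn0]
      rw [← heq]
      apply Real.exp_le_exp.mpr
      rw [hnp]
      linarith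
    calc Real.exp (-1) / n ≤ Real.exp (-((n:ℝ) * p / (1 - p))) := hexp2
      _ ≤ (1 - p) ^ n := hexp
      _ ≤ Pn n p (q n) := hge
  refine ⟨⟨Real.exp (-1), hc, main⟩, ?_⟩
  intro h
  have hlt : ∀ᶠ n : ℕ in atTop,
      (n:ℝ) * Pn n (Real.log n / n) (q n) < Real.exp (-1) :=
    h.eventually (gt_mem_nhds hc)
  obtain ⟨n, hmain, hlt, hn1⟩ := (main.and (hlt.and (eventually_ge_atTop 1))).exists
  have hn0 : (0:ℝ) < n := by exact_mod_cast Nat.lt_of_lt_of_le Nat.zero_lt_one hn1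
  rw [div_le_iff₀ hn0] at hmain
  nlinarith
end
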